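/- arXiv:1709.01849 — 9 statements merged into one kernel-verified Lean document; each statement's English description precedes it below -/
import Mathlib

section
/- Let K be a finite Kripke structure, ρ and ρ' be two tracks over K, and k ∈ ℕ. If ρ and ρ' are k-equivalent, then ρ and ρ' are h-equivalent for every h with 0 ≤ h ≤ k. -/
open Classical

universe u v

structure KripkeStructure (AP : Type u) (W : Type v) where
  delta : W → W → Prop
  leftTotal : ∀ w, ∃ w', delta w w'
  mu : W → Set AP
  init : W

variable {AP : Type u} {W : Type v}

/-- A track over a Kripke structure: a finite sequence of at least two states
respecting the transition relation. -/
def IsTrack (K : KripkeStructure AP W) (ρ : List W) : Prop :=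
  2 ≤ ρ.length ∧ ρ.Chain' K.delta

/-- `σ` is a proper prefix (of length at least 2) of `ρ`, i.e. `σ ∈ Pref(ρ)`. -/
def ProperPrefix (σ ρ : List W) : Prop :=
  σ <+: ρ ∧ σ ≠ ρ ∧ 2 ≤ σ.length

/-- `σ` is a proper suffix (of length at least 2) of `ρ`, i.e. `σ ∈ Suff(ρ)`. -/
def ProperSuffix (σ ρ : List W) : Prop :=
  σ <:+ ρ ∧ σ ≠ ρ ∧ 2 ≤ σ.length

/-- Formulas of the HS fragment AĀBB̄Ē. -/
inductive HSFormula (AP : Type u) : Type u where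
  | prop (p : AP)
  | neg (φ : HSFormula AP)
  | and (φ ψ : HSFormula AP)
  | modA (φ : HSFormula AP)
  | modAbar (φ : HSFormula AP)
  | modB (φ : HSFormula AP)
  | modBbar (φ : HSFormula AP)
  | modEbar (φ : HSFormula AP)

/-- Satisfaction of an HS formula by a track, under the homogeneity assumption. -/
def sat (K : KripkeStructure AP W) : HSFormula AP → List W → Prop
  | .prop p, ρ => ∀ w ∈ ρ, p ∈ K.mu w
  | .neg φ, ρ => ¬ sat K φ ρ
  | .and φ ψ, ρ => sat K φ ρ ∧ sat K ψ ρ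
  | .modA φ, ρ => ∃ σ, IsTrack K σ ∧ σ.head? = ρ.getLast? ∧ sat K φ σ
  | .modAbar φ, ρ => ∃ σ, IsTrack K σ ∧ σ.getLast? = ρ.head? ∧ sat K φ σ
  | .modB φ, ρ => ∃ σ, ProperPrefix σ ρ ∧ sat K φ σ
  | .modBbar φ, ρ => ∃ σ, IsTrack K σ ∧ ProperPrefix ρ σ ∧ sat K φ σ
  | .modEbar φ, ρ => ∃ σ, IsTrack K σ ∧ ProperSuffix ρ σ ∧ sat K φ σ

/-- The B-nesting depth of an AĀBB̄Ē formula. -/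
def nestB : HSFormula AP → ℕ
  | .prop _ => 0
  | .neg φ => nestB φ
  | .and φ ψ => max (nestB φ) (nestB ψ)
  | .modA φ => nestB φ
  | .modAbar φ => nestB φ
  | .modB φ => 1 + nestB φ
  | .modBbar φ => nestB φ
  | .modEbar φ => nestB φ

-- aux lemmas to insert above the theorem
def getProp : HSFormula AP → AP
  | .prop p => p
  | .neg φ => getProp φ
  | .and φ _ => getProp φ
  | .modA φ => getProp φ
  | .modAbar φ => getProp φ
  | .modB φ => getProp φ
  | .modBbar φ => getProp φ
  | .modEbar φ => getProp φ

def iterB : ℕ → HSFormula AP → HSFormula AP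
  | 0, φ => φ
  | n+1, φ => .modB (iterB n φ)

lemma nestB_iterB (m : ℕ) (φ : HSFormula AP) : nestB (iterB m φ) = m + nestB φ := by
  induction m with
  | zero => simp [iterB]
  | succ n ih => simp [iterB, nestB, ih]; omega

def taut (p : AP) (m : ℕ) : HSFormula AP :=
  .neg (.and (iterB m (.prop p)) (.neg (iterB m (.prop p))))

lemma nestB_taut (p : AP) (m : ℕ) : nestB (taut p m) = m := by
  simp [taut, nestB, nestB_iterB]

lemma sat_taut (K : KripkeStructure AP W) (p : AP) (m : ℕ) (ρ : List W) :
    sat K (taut p m) ρ := by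
  simp [taut, sat]

/-- k-equivalence propagates downwards: if `ρ` and `ρ'` satisfy the
same AĀBB̄Ē formulas of B-nesting depth `k`, then for every `h ≤ k` they satisfy
the same formulas of B-nesting depth `h`. -/
theorem kEquiv_downward [Fintype W] (K : KripkeStructure AP W)
    (ρ ρ' : List W) (hρ : IsTrack K ρ) (hρ' : IsTrack K ρ') (k : ℕ)
    (hk : ∀ ψ : HSFormula AP, nestB ψ = k → (sat K ψ ρ ↔ sat K ψ ρ')) :
    ∀ h, h ≤ k → ∀ ψ : HSFormula AP, nestB ψ = h → (sat K ψ ρ ↔ sat K ψ ρ') := by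
  intro h hh ψ hψ
  have key := hk (ψ.and (taut (getProp ψ) k)) (by
    simp [nestB, hψ, nestB_taut, nestB_iterB]; omega)
  simpa [sat, sat_taut] using key
end

section
/- Let k ∈ ℕ, K=(AP,W,δ,μ,v0) be a finite Kripke structure, and ρ1, ρ1', ρ2, ρ2' be tracks over K such that (lst(ρ1),fst(ρ1')) ∈ δ, (lst(ρ2),fst(ρ2')) ∈ δ, ρ1 ∼k ρ2, and ρ1' ∼k ρ2'. Then the concatenations satisfy ρ1·ρ1' ∼k ρ2·ρ2'. -/
open Classical

universe u v

variable {AP : Type u} {W : Type v}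

/-- A descriptor element: (initial state, set of internal states, final state). -/
abbrev DescEl (W : Type v) : Type v := W × Set W × W

noncomputable def headW [Nonempty W] (ρ : List W) : W :=
  ρ.headD (Classical.arbitrary W)

noncomputable def lastW [Nonempty W] (ρ : List W) : W :=
  ρ.getLastD (Classical.arbitrary W)

/-- The set of internal states of a track. -/
def intStates (ρ : List W) : Set W := {w | w ∈ (ρ.drop 1).dropLast}

/-- The descriptor element associated with a track. -/
noncomputable def descEl [Nonempty W] (ρ : List W) : DescEl W :=
  (headW ρ, intStates ρ, lastW ρ)

/-- The type of B_k-descriptors (trees of depth `k` represented hereditarily as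
sets of subtrees, which identifies isomorphic descriptors). -/
def BDesc (W : Type v) : ℕ → Type v
  | 0 => DescEl W
  | k + 1 => DescEl W × Set (BDesc W k)

/-- The B_k-descriptor of a track: the root is labelled by the descriptor element of
the track and, for `k > 0`, the subtrees of the root are exactly (one copy each)
the B_(k-1)-descriptors of the proper prefixes of the track. Two tracks are
k-descriptor equivalent (`ρ ∼k ρ'`) iff `bDesc k ρ = bDesc k ρ'`. -/
noncomputable def bDesc [Nonempty W] : (k : ℕ) → List W → BDesc W k
  | 0, ρ => descEl ρ
  | k + 1, ρ => (descEl ρ, {d | ∃ σ, ProperPrefix σ ρ ∧ d = bDesc k σ})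

set_option linter.unusedSectionVars false

section Aux

variable [Nonempty W]

private lemma headW_append {ρ : List W} (τ : List W) (h : ρ ≠ []) :
    headW (ρ ++ τ) = headW ρ := by
  cases ρ with
  | nil => exact absurd rfl h
  | cons a l => rfl

private lemma lastW_append (ρ : List W) {τ : List W} (h : τ ≠ []) :
    lastW (ρ ++ τ) = lastW τ := by
  induction ρ with
  | nil => rfl
  | cons a l ih =>
    cases l with
    | nil =>
      cases τ with
      | nil => exact absurd rfl h
      | cons b m => simp [lastW, List.getLastD_cons]
    | cons b m => simpa [lastW, List.getLastD_cons] using ih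

private lemma intStates_append {ρ τ : List W} (hρ : ρ ≠ []) (hτ : τ ≠ []) :
    intStates (ρ ++ τ) = {w | w ∈ ρ.tail ∨ w ∈ τ.dropLast} := by
  cases ρ with
  | nil => exact absurd rfl hρ
  | cons a l =>
    ext w
    simp [intStates, List.dropLast_append_of_ne_nil hτ]

private lemma mem_tail_iff {ρ : List W} (h : 2 ≤ ρ.length) {w : W} :
    w ∈ ρ.tail ↔ w ∈ intStates ρ ∨ w = lastW ρ := by
  cases ρ with
  | nil => simp at h
  | cons a l =>
    have hl : l ≠ [] := by
      intro hc; subst hc; simp at h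
    have hlast : lastW (a :: l) = l.getLast hl := by
      rw [lastW, List.getLastD_eq_getLast?,
        List.getLast?_eq_getLast (l := a :: l) (by simp), Option.getD_some,
        List.getLast_cons hl]
    rw [hlast]
    conv_lhs => rw [List.tail_cons, ← List.dropLast_append_getLast hl]
    simp [intStates, eq_comm]

private lemma mem_dropLast_iff {τ : List W} (h : 2 ≤ τ.length) {w : W} :
    w ∈ τ.dropLast ↔ w = headW τ ∨ w ∈ intStates τ := by
  cases τ with
  | nil => simp at h
  | cons a l =>
    have hl : l ≠ [] := by
      intro hc; subst hc; simp at h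
    rw [List.dropLast_cons_of_ne_nil hl]
    simp [headW, intStates, eq_comm]

private lemma descEl_append {ρ₁ ρ₂ τ₁ τ₂ : List W}
    (h1 : 2 ≤ ρ₁.length) (h2 : 2 ≤ ρ₂.length)
    (hρ : descEl ρ₁ = descEl ρ₂)
    (ht1 : 1 ≤ τ₁.length) (ht2 : 1 ≤ τ₂.length)
    (hτ : descEl τ₁ = descEl τ₂)
    (hiff : τ₁.length = 1 ↔ τ₂.length = 1) :
    descEl (ρ₁ ++ τ₁) = descEl (ρ₂ ++ τ₂) := by
  have hρ1 : ρ₁ ≠ [] := by intro hc; subst hc; simp at h1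
  have hρ2 : ρ₂ ≠ [] := by intro hc; subst hc; simp at h2
  have hτ1 : τ₁ ≠ [] := by intro hc; subst hc; simp at ht1
  have hτ2 : τ₂ ≠ [] := by intro hc; subst hc; simp at ht2
  obtain ⟨hρh, hρi, hρl⟩ : headW ρ₁ = headW ρ₂ ∧ intStates ρ₁ = intStates ρ₂ ∧
      lastW ρ₁ = lastW ρ₂ := by
    simpa [descEl, Prod.ext_iff] using hρ
  obtain ⟨hτh, hτi, hτl⟩ : headW τ₁ = headW τ₂ ∧ intStates τ₁ = intStates τ₂ ∧
      lastW τ₁ = lastW τ₂ := by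
    simpa [descEl, Prod.ext_iff] using hτ
  have hint : intStates (ρ₁ ++ τ₁) = intStates (ρ₂ ++ τ₂) := by
    rw [intStates_append hρ1 hτ1, intStates_append hρ2 hτ2]
    ext w
    simp only [Set.mem_setOf_eq, mem_tail_iff h1, mem_tail_iff h2, hρi, hρl]
    by_cases hc : τ₁.length = 1
    · have hc2 : τ₂.length = 1 := hiff.mp hc
      obtain ⟨x, rfl⟩ := List.length_eq_one_iff.mp hc
      obtain ⟨y, rfl⟩ := List.length_eq_one_iff.mp hc2
      simp
    · have hg1 : 2 ≤ τ₁.length := by omega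
      have hg2 : 2 ≤ τ₂.length := by
        have : τ₂.length ≠ 1 := fun h => hc (hiff.mpr h)
        have : τ₂.length ≠ 0 := by simpa using hτ2
        omega
      rw [mem_dropLast_iff hg1, mem_dropLast_iff hg2, hτh, hτi]
  simp [descEl, headW_append _ hρ1, headW_append _ hρ2, hρh,
    lastW_append _ hτ1, lastW_append _ hτ2, hτl, hint]

private lemma bDesc_succ (k : ℕ) (ρ : List W) :
    bDesc (k + 1) ρ = ((descEl ρ, {d | ∃ σ, ProperPrefix σ ρ ∧ d = bDesc k σ}) :
      DescEl W × Set (BDesc W k)) := rfl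

private lemma descEl_of_bDesc {k : ℕ} {ρ ρ' : List W} (h : bDesc k ρ = bDesc k ρ') :
    descEl ρ = descEl ρ' := by
  cases k with
  | zero => exact h
  | succ k =>
    rw [bDesc_succ, bDesc_succ] at h
    exact congrArg Prod.fst h

private lemma bDesc_proj : ∀ (k : ℕ) {ρ ρ' : List W},
    bDesc (k + 1) ρ = bDesc (k + 1) ρ' → bDesc k ρ = bDesc k ρ' := by
  intro k
  induction k with
  | zero => intro ρ ρ' h; exact descEl_of_bDesc h
  | succ k ih =>
    intro ρ ρ' h
    have hde := descEl_of_bDesc h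
    rw [bDesc_succ, bDesc_succ] at h ⊢
    have h2 := congrArg Prod.snd h
    simp only at h2
    refine Prod.ext hde ?_
    have key : ∀ {α β : List W},
        ({d | ∃ σ, ProperPrefix σ α ∧ d = bDesc (k + 1) σ} : Set (BDesc W (k+1))) =
          {d | ∃ σ, ProperPrefix σ β ∧ d = bDesc (k + 1) σ} →
        ({d | ∃ σ, ProperPrefix σ α ∧ d = bDesc k σ} : Set (BDesc W k)) ⊆
          {d | ∃ σ, ProperPrefix σ β ∧ d = bDesc k σ} := by
      intro α β hset d hd
      obtain ⟨σ, hσ, rfl⟩ := hd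
      have : bDesc (k + 1) σ ∈
          ({d | ∃ σ, ProperPrefix σ α ∧ d = bDesc (k + 1) σ} : Set (BDesc W (k+1))) :=
        ⟨σ, hσ, rfl⟩
      rw [hset] at this
      obtain ⟨σ', hσ', hEq⟩ := this
      exact ⟨σ', hσ', ih hEq⟩
    exact Set.Subset.antisymm (key h2) (key h2.symm)

/-- Pairs of "second parts" that can be matched in a concatenation. -/
private def GoodPair (k : ℕ) (τ₁ τ₂ : List W) : Prop :=
  (τ₁.length = 1 ∧ τ₁ = τ₂) ∨ (2 ≤ τ₁.length ∧ 2 ≤ τ₂.length ∧ bDesc k τ₁ = bDesc k τ₂)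

private lemma GoodPair.symm {k : ℕ} {τ₁ τ₂ : List W} (h : GoodPair k τ₁ τ₂) :
    GoodPair k τ₂ τ₁ := by
  rcases h with ⟨h1, rfl⟩ | ⟨h1, h2, h3⟩
  · exact Or.inl ⟨h1, rfl⟩
  · exact Or.inr ⟨h2, h1, h3.symm⟩

private lemma GoodPair.len1 {k : ℕ} {τ₁ τ₂ : List W} (h : GoodPair k τ₁ τ₂) :
    1 ≤ τ₁.length ∧ 1 ≤ τ₂.length ∧ (τ₁.length = 1 ↔ τ₂.length = 1) := by
  rcases h with ⟨h1, rfl⟩ | ⟨h1, h2, h3⟩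
  · omega
  · omega

private lemma GoodPair.descEl {k : ℕ} {τ₁ τ₂ : List W} (h : GoodPair k τ₁ τ₂) :
    descEl τ₁ = descEl τ₂ := by
  rcases h with ⟨h1, rfl⟩ | ⟨h1, h2, h3⟩
  · rfl
  · exact descEl_of_bDesc h3

private lemma take_one_eq {τ : List W} (h : τ ≠ []) : τ.take 1 = [headW τ] := by
  cases τ with
  | nil => exact absurd rfl h
  | cons a l => rfl

private lemma concat_main : ∀ (k : ℕ) (ρ₁ ρ₂ τ₁ τ₂ : List W),
    2 ≤ ρ₁.length → 2 ≤ ρ₂.length → bDesc k ρ₁ = bDesc k ρ₂ → GoodPair k τ₁ τ₂ →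
    bDesc k (ρ₁ ++ τ₁) = bDesc k (ρ₂ ++ τ₂) := by
  intro k
  induction k with
  | zero =>
    intro ρ₁ ρ₂ τ₁ τ₂ h1 h2 hρ hτ
    obtain ⟨ht1, ht2, hiff⟩ := hτ.len1
    exact descEl_append h1 h2 hρ ht1 ht2 hτ.descEl hiff
  | succ k ih =>
    intro ρ₁ ρ₂ τ₁ τ₂ h1 h2 hρ hτ
    have subs : ∀ (ρ₁ ρ₂ τ₁ τ₂ : List W), 2 ≤ ρ₁.length → 2 ≤ ρ₂.length →
        bDesc (k + 1) ρ₁ = bDesc (k + 1) ρ₂ → GoodPair (k + 1) τ₁ τ₂ →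
        ({d | ∃ σ, ProperPrefix σ (ρ₁ ++ τ₁) ∧ d = bDesc k σ} : Set (BDesc W k)) ⊆
          {d | ∃ σ, ProperPrefix σ (ρ₂ ++ τ₂) ∧ d = bDesc k σ} := by
      clear h1 h2 hρ hτ ρ₁ ρ₂ τ₁ τ₂
      intro ρ₁ ρ₂ τ₁ τ₂ h1 h2 hρ hτ d hd
      obtain ⟨ht1, ht2, _⟩ := hτ.len1
      obtain ⟨σ, ⟨hpre, hne, hlen⟩, rfl⟩ := hd
      have hρk : bDesc k ρ₁ = bDesc k ρ₂ := bDesc_proj k hρ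
      by_cases hcase : σ.length ≤ ρ₁.length
      · -- σ is a prefix of ρ₁
        have hσρ : σ <+: ρ₁ :=
          List.prefix_of_prefix_length_le hpre (List.prefix_append ρ₁ τ₁) hcase
        by_cases hσeq : σ = ρ₁
        · subst hσeq
          refine ⟨ρ₂, ⟨List.prefix_append ρ₂ τ₂, ?_, h2⟩, hρk⟩
          intro hc
          have := congrArg List.length hc
          rw [List.length_append] at this
          omega
        · -- σ is a proper prefix of ρ₁
          have hmem : bDesc k σ ∈
              ({d | ∃ σ', ProperPrefix σ' ρ₁ ∧ d = bDesc k σ'} : Set (BDesc W k)) :=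
            ⟨σ, ⟨hσρ, hσeq, hlen⟩, rfl⟩
          rw [bDesc_succ, bDesc_succ] at hρ
          have hset := congrArg Prod.snd hρ
          simp only at hset
          rw [hset] at hmem
          obtain ⟨σ₂, ⟨hσ₂pre, hσ₂ne, hσ₂len⟩, hEq⟩ := hmem
          have hlt : σ₂.length < ρ₂.length :=
            lt_of_le_of_ne hσ₂pre.length_le (fun h => hσ₂ne (hσ₂pre.eq_of_length h))
          refine ⟨σ₂, ⟨hσ₂pre.trans (List.prefix_append ρ₂ τ₂), ?_, hσ₂len⟩, hEq⟩
          intro hc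
          have := congrArg List.length hc
          rw [List.length_append] at this
          omega
      · -- ρ₁ is a proper prefix of σ : σ = ρ₁ ++ τ
        push_neg at hcase
        have hρσ : ρ₁ <+: σ :=
          List.prefix_of_prefix_length_le (List.prefix_append ρ₁ τ₁) hpre (le_of_lt hcase)
        obtain ⟨τ, rfl⟩ := hρσ
        have hττ : τ <+: τ₁ := (List.prefix_append_right_inj ρ₁).mp hpre
        have hτne : τ ≠ τ₁ := fun hc => hne (by rw [hc])
        have hτlen : 1 ≤ τ.length := by
          have h := hcase
          rw [List.length_append] at h
          omega
        rcases hτ with ⟨hl1, rfl⟩ | ⟨hg1, hg2, hbτ⟩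
        · -- second part has length 1 : impossible
          exact absurd (hττ.eq_of_length (by have := hττ.length_le; omega)) hτne
        · by_cases hτ1 : τ.length = 1
          · -- τ = [headW τ₁]
            have hne1 : τ₁ ≠ [] := by intro hc; rw [hc] at hg1; simp at hg1
            have hne2 : τ₂ ≠ [] := by intro hc; rw [hc] at hg2; simp at hg2
            have hτeq : τ = [headW τ₁] := by
              rw [List.prefix_iff_eq_take.mp hττ, hτ1, take_one_eq hne1]
            have hh : headW τ₁ = headW τ₂ :=
              congrArg Prod.fst (descEl_of_bDesc hbτ)
            refine ⟨ρ₂ ++ [headW τ₂], ⟨?_, ?_, ?_⟩, ?_⟩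
            · refine (List.prefix_append_right_inj ρ₂).mpr ?_
              rw [List.prefix_iff_eq_take]
              simp [take_one_eq hne2]
            · intro hc
              have := congrArg List.length hc
              simp only [List.length_append, List.length_singleton] at this
              omega
            · simp; omega
            · rw [hτeq]
              refine ih ρ₁ ρ₂ [headW τ₁] [headW τ₂] h1 h2 hρk ?_
              exact Or.inl ⟨rfl, by rw [hh]⟩
          · -- τ is a proper prefix of τ₁
            have hg : 2 ≤ τ.length := by omega
            have hmem : bDesc k τ ∈
                ({d | ∃ σ', ProperPrefix σ' τ₁ ∧ d = bDesc k σ'} : Set (BDesc W k)) :=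
              ⟨τ, ⟨hττ, hτne, hg⟩, rfl⟩
            rw [bDesc_succ, bDesc_succ] at hbτ
            have hset := congrArg Prod.snd hbτ
            simp only at hset
            rw [hset] at hmem
            obtain ⟨τ₂', ⟨hτ₂pre, hτ₂ne, hτ₂len⟩, hEq⟩ := hmem
            have hlt : τ₂'.length < τ₂.length :=
              lt_of_le_of_ne hτ₂pre.length_le (fun h => hτ₂ne (hτ₂pre.eq_of_length h))
            refine ⟨ρ₂ ++ τ₂', ⟨(List.prefix_append_right_inj ρ₂).mpr hτ₂pre, ?_, ?_⟩, ?_⟩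
            · intro hc
              have := congrArg List.length hc
              simp only [List.length_append] at this
              omega
            · simp; omega
            · exact ih ρ₁ ρ₂ τ τ₂' h1 h2 hρk (Or.inr ⟨hg, hτ₂len, hEq⟩)
    obtain ⟨ht1, ht2, hiff⟩ := hτ.len1
    rw [bDesc_succ, bDesc_succ]
    refine Prod.ext (descEl_append h1 h2 (descEl_of_bDesc hρ) ht1 ht2 hτ.descEl hiff) ?_
    exact Set.Subset.antisymm (subs ρ₁ ρ₂ τ₁ τ₂ h1 h2 hρ hτ)
      (subs ρ₂ ρ₁ τ₂ τ₁ h2 h1 hρ.symm hτ.symm)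

end Aux

/-- concatenation preserves k-descriptor equivalence. -/
theorem concat_bDesc [Fintype W] [Nonempty W] (K : KripkeStructure AP W) (k : ℕ)
    (ρ₁ ρ₁' ρ₂ ρ₂' : List W)
    (h₁ : IsTrack K ρ₁) (h₁' : IsTrack K ρ₁') (h₂ : IsTrack K ρ₂) (h₂' : IsTrack K ρ₂')
    (hd₁ : K.delta (lastW ρ₁) (headW ρ₁')) (hd₂ : K.delta (lastW ρ₂) (headW ρ₂'))
    (he₁ : bDesc k ρ₁ = bDesc k ρ₂) (he₂ : bDesc k ρ₁' = bDesc k ρ₂') :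
    bDesc k (ρ₁ ++ ρ₁') = bDesc k (ρ₂ ++ ρ₂') := by
  exact concat_main k ρ₁ ρ₂ ρ₁' ρ₂' h₁.1 h₂.1 he₁ (Or.inr ⟨h₁'.1, h₂'.1, he₂⟩)
end

section
/- Let k ≥ 2 and let ρ_ds(i) and ρ_ds(j), with 0 ≤ i < j < |ρ_ds|, be two k-indistinguishable occurrences of the same descriptor element in a descriptor sequence ρ_ds. Then ρ_ds(i) and ρ_ds(j) are also (k−1)-indistinguishable. -/
open Classical

universe u v

variable {AP : Type u} {W : Type v}

/-- The descriptor sequence of a track: `dsSeq ρ i` is the descriptor element of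
the prefix `ρ(0, i+1)` of `ρ` (positions `0 ≤ i < |ρ| - 1`). -/
noncomputable def dsSeq [Nonempty W] (ρ : List W) (i : ℕ) : DescEl W :=
  descEl (ρ.take (i + 2))

/-- `DElm(ρ_ds(0, i-1))`: the descriptor elements occurring at positions `< i`. -/
noncomputable def DElmUpTo [Nonempty W] (ρ : List W) (i : ℕ) : Set (DescEl W) :=
  {d | ∃ ℓ < i, dsSeq ρ ℓ = d}

/-- k-indistinguishability of the occurrences at positions `i < j` of the
descriptor sequence of `ρ` (defined for `k ≥ 1`). -/
def Indist [Nonempty W] (ρ : List W) : ℕ → ℕ → ℕ → Prop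
  | 0, _, _ => False
  | 1, i, j => i < j ∧ j < ρ.length - 1 ∧ dsSeq ρ i = dsSeq ρ j ∧
      DElmUpTo ρ i = DElmUpTo ρ j
  | k + 2, i, j => i < j ∧ j < ρ.length - 1 ∧ dsSeq ρ i = dsSeq ρ j ∧
      ∀ ℓ, i ≤ ℓ → ℓ < j → ∃ ℓ' < i, Indist ρ (k + 1) ℓ' ℓ

lemma indist_dsSeq_eq [Nonempty W] (ρ : List W) (k i j : ℕ)
    (h : Indist ρ k i j) : dsSeq ρ i = dsSeq ρ j := by
  match k with
  | 0 => exact h.elim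
  | 1 => exact h.2.2.1
  | k + 2 => exact h.2.2.1

lemma indist_aux [Nonempty W] (ρ : List W) :
    ∀ k i j, Indist ρ (k + 2) i j → Indist ρ (k + 1) i j := by
  intro k
  induction k with
  | zero =>
    intro i j h
    obtain ⟨hij, hj, hds, H⟩ := h
    refine ⟨hij, hj, hds, ?_⟩
    ext d
    constructor
    · rintro ⟨ℓ, hℓ, rfl⟩
      exact ⟨ℓ, hℓ.trans hij, rfl⟩
    · rintro ⟨ℓ, hℓ, rfl⟩
      rcases lt_or_ge ℓ i with h' | h'
      · exact ⟨ℓ, h', rfl⟩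
      · obtain ⟨ℓ', hℓ', hI⟩ := H ℓ h' hℓ
        exact ⟨ℓ', hℓ', indist_dsSeq_eq ρ 1 ℓ' ℓ hI⟩
  | succ k ih =>
    intro i j h
    obtain ⟨hij, hj, hds, H⟩ := h
    refine ⟨hij, hj, hds, ?_⟩
    intro ℓ h1 h2
    obtain ⟨ℓ', hℓ', hI⟩ := H ℓ h1 h2
    exact ⟨ℓ', hℓ', ih ℓ' ℓ hI⟩

/-- for `k ≥ 2`, k-indistinguishable occurrences are also
(k-1)-indistinguishable. -/
theorem indist_downward [Fintype W] [Nonempty W] (K : KripkeStructure AP W)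
    (ρ : List W) (hρ : IsTrack K ρ) (k i j : ℕ) (hk : 2 ≤ k)
    (h : Indist ρ k i j) :
    Indist ρ (k - 1) i j := by
  obtain ⟨m, rfl⟩ : ∃ m, k = m + 2 := ⟨k - 2, by omega⟩
  simpa using indist_aux ρ m i j h
end

section
/- Let k ≥ 1 and let ρ_ds(i) and ρ_ds(m), with 0 ≤ i < m < |ρ_ds|, be two k-indistinguishable occurrences of the same descriptor element in a descriptor sequence ρ_ds. If ρ_ds(j) = ρ_ds(m) for some j with i < j < m, then ρ_ds(j) and ρ_ds(m) are also k-indistinguishable. -/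
open Classical

universe u v

variable {AP : Type u} {W : Type v}

/-- if `ρ_ds(i)` and `ρ_ds(m)` are k-indistinguishable and
`ρ_ds(j) = ρ_ds(m)` for some `i < j < m`, then `ρ_ds(j)` and `ρ_ds(m)` are also
k-indistinguishable. -/
theorem indist_between [Fintype W] [Nonempty W] (K : KripkeStructure AP W)
    (ρ : List W) (hρ : IsTrack K ρ) (k i j m : ℕ) (hk : 1 ≤ k)
    (h : Indist ρ k i m) (hij : i < j) (hjm : j < m)
    (he : dsSeq ρ j = dsSeq ρ m) :
    Indist ρ k j m := by
  match k, hk, h with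
  | 1, _, ⟨him, hm, hde, hD⟩ =>
    refine ⟨hjm, hm, he, ?_⟩
    have h1 : DElmUpTo ρ i ⊆ DElmUpTo ρ j := fun d ⟨ℓ, hℓ, hd⟩ =>
      ⟨ℓ, hℓ.trans hij, hd⟩
    have h2 : DElmUpTo ρ j ⊆ DElmUpTo ρ m := fun d ⟨ℓ, hℓ, hd⟩ =>
      ⟨ℓ, hℓ.trans hjm, hd⟩
    exact le_antisymm h2 (hD ▸ h1)
  | k + 2, _, ⟨him, hm, hde, hall⟩ =>
    refine ⟨hjm, hm, he, fun ℓ hjl hlm => ?_⟩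
    obtain ⟨ℓ', hℓ', hind⟩ := hall ℓ (le_of_lt (lt_of_lt_of_le hij hjl)) hlm
    exact ⟨ℓ', hℓ'.trans hij, hind⟩
end

section
/- Let ρ_ds(i), ρ_ds(j), and ρ_ds(m), with 0 ≤ i < j < m < |ρ_ds|, be three occurrences of the same descriptor element in a descriptor sequence ρ_ds. If the pair ρ_ds(i), ρ_ds(j) and the pair ρ_ds(j), ρ_ds(m) are both k-indistinguishable, for some k ≥ 1, then ρ_ds(i) and ρ_ds(m) are also k-indistinguishable. -/
open Classical

universe u v

variable {AP : Type u} {W : Type v}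

theorem indist_trans_aux [Nonempty W] (ρ : List W) :
    ∀ k a b c, Indist ρ k a b → Indist ρ k b c → Indist ρ k a c := by
  intro k
  induction k using Nat.strong_induction_on with
  | _ k IH =>
    match k with
    | 0 => intro a b c h; exact h.elim
    | 1 =>
      rintro a b c ⟨hab, _, dab, Dab⟩ ⟨hbc, hcL, dbc, Dbc⟩
      exact ⟨hab.trans hbc, hcL, dab.trans dbc, Dab.trans Dbc⟩
    | (n + 2) =>
      rintro a b c ⟨hab, _, dab, H1⟩ ⟨hbc, hcL, dbc, H2⟩
      refine ⟨hab.trans hbc, hcL, dab.trans dbc, ?_⟩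
      intro ℓ haℓ hℓc
      by_cases hℓb : ℓ < b
      · exact H1 ℓ haℓ hℓb
      · obtain ⟨ℓ', hℓ'b, hind⟩ := H2 ℓ (le_of_not_gt hℓb) hℓc
        by_cases hℓ'a : ℓ' < a
        · exact ⟨ℓ', hℓ'a, hind⟩
        · obtain ⟨ℓ'', hℓ''a, hind'⟩ := H1 ℓ' (le_of_not_gt hℓ'a) hℓ'b
          exact ⟨ℓ'', hℓ''a, IH (n + 1) (Nat.lt_succ_self _) ℓ'' ℓ' ℓ hind' hind⟩

/-- k-indistinguishability is transitive on occurrences of the same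
descriptor element. -/
theorem indist_trans [Fintype W] [Nonempty W] (K : KripkeStructure AP W)
    (ρ : List W) (hρ : IsTrack K ρ) (k i j m : ℕ) (hk : 1 ≤ k)
    (hij : i < j) (hjm : j < m) (hm : m < ρ.length - 1)
    (hdij : dsSeq ρ i = dsSeq ρ j) (hdjm : dsSeq ρ j = dsSeq ρ m)
    (h1 : Indist ρ k i j) (h2 : Indist ρ k j m) :
    Indist ρ k i m := by
  exact indist_trans_aux ρ k i j m h1 h2
end

section
/- Let K=(AP,W,δ,μ,w0) be a finite Kripke structure. For each track ρ of K, associated with a descriptor element d, there exists a track ρ' of K, associated with the same descriptor element d, such that |ρ'| ≤ 2 + |W|². -/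
open Classical

universe u v

variable {AP : Type u} {W : Type v}

section AuxLemmas

variable {W : Type v}

lemma headW_eq_getD [Nonempty W] (ρ : List W) (h : ρ ≠ []) (d : W) :
    headW ρ = ρ.getD 0 d := by
  cases ρ with
  | nil => exact absurd rfl h
  | cons a l => rfl

lemma lastW_eq_getD [Nonempty W] (ρ : List W) (h : ρ ≠ []) (d : W) :
    lastW ρ = ρ.getD (ρ.length - 1) d := by
  have hlt : ρ.length - 1 < ρ.length := by
    have := List.length_pos_iff.mpr h; omega
  rw [lastW, List.getLastD_eq_getLast?, List.getLast?_eq_getLast h,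
    List.getLast_eq_getElem, List.getD_eq_getElem _ _ hlt]
  rfl

lemma mem_intStates_iff (ρ : List W) (d : W) (w : W) :
    w ∈ intStates ρ ↔ ∃ k, 1 ≤ k ∧ k + 1 < ρ.length ∧ ρ.getD k d = w := by
  simp only [intStates, Set.mem_setOf_eq, List.mem_iff_getElem]
  constructor
  · rintro ⟨t, ht, rfl⟩
    have ht' := ht
    simp only [List.length_dropLast, List.length_drop] at ht'
    have h2 : t + 1 + 1 < ρ.length := by omega
    refine ⟨t + 1, by omega, h2, ?_⟩
    rw [List.getD_eq_getElem _ _ (by omega), List.getElem_dropLast, List.getElem_drop]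
    congr 1
    omega
  · rintro ⟨k, hk1, hk2, rfl⟩
    have hlt : k - 1 < ((ρ.drop 1).dropLast).length := by
      simp only [List.length_dropLast, List.length_drop]; omega
    refine ⟨k - 1, hlt, ?_⟩
    rw [List.getElem_dropLast, List.getElem_drop,
      List.getD_eq_getElem _ _ (by omega : k < ρ.length)]
    congr 1
    omega

lemma chain'_iff_getD (R : W → W → Prop) (l : List W) (d : W) :
    l.Chain' R ↔ ∀ k, k + 1 < l.length → R (l.getD k d) (l.getD (k + 1) d) := by
  rw [show l.Chain' R ↔ l.IsChain R from Iff.rfl, List.isChain_iff_getElem]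
  constructor
  · intro h k hk
    have := h k (by omega)
    rwa [      ← List.getD_eq_getElem _ d (by omega : k < l.length),
      ← List.getD_eq_getElem _ d (by omega : k + 1 < l.length)] at this
  · intro h k hk
    have := h k (by omega)
    rw [List.getD_eq_getElem _ _ (by omega : k < l.length),
      List.getD_eq_getElem _ _ (by omega : k + 1 < l.length)] at this
    simpa using this

/-- Cutting a loop out of a track, provided every removed internal state is covered
by an earlier internal position. -/
lemma cut_track {AP : Type u} [Nonempty W] (K : KripkeStructure AP W) (ρ : List W)
    (hρ : IsTrack K ρ) (d : W) (i j : ℕ) (h1 : 1 ≤ i) (hij : i < j)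
    (hj : j + 1 < ρ.length) (heq : ρ.getD i d = ρ.getD j d)
    (hcov : ∀ k, i < k → k ≤ j → ∃ m, 1 ≤ m ∧ m ≤ i ∧ ρ.getD m d = ρ.getD k d) :
    ∃ ρ', IsTrack K ρ' ∧ descEl ρ' = descEl ρ ∧ ρ'.length < ρ.length := by
  obtain ⟨hlen, hch⟩ := hρ
  have hlen' : (ρ.take (i + 1) ++ ρ.drop (j + 1)).length = ρ.length - (j - i) := by
    simp only [List.length_append, List.length_take, List.length_drop]
    omega
  have hget : ∀ k, k < (ρ.take (i + 1) ++ ρ.drop (j + 1)).length →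
      (ρ.take (i + 1) ++ ρ.drop (j + 1)).getD k d =
        if k ≤ i then ρ.getD k d else ρ.getD (k + (j - i)) d := by
    intro k hk
    rw [List.getD_eq_getElem _ _ hk, List.getElem_append]
    have hk2 := hk
    simp only [List.length_append, List.length_take, List.length_drop] at hk2
    split_ifs with h' h2 h3
    · rw [List.getElem_take, List.getD_eq_getElem]
    · exfalso; simp only [List.length_take] at h'; omega
    · exfalso; simp only [List.length_take] at h'; omega
    · rw [List.getElem_drop, List.getD_eq_getElem _ _ (by omega)]
      congr 1
      simp only [List.length_take] at h' ⊢
      omega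
  have hlt : (ρ.take (i + 1) ++ ρ.drop (j + 1)).length < ρ.length := by omega
  have hlen2 : 2 ≤ (ρ.take (i + 1) ++ ρ.drop (j + 1)).length := by omega
  refine ⟨ρ.take (i + 1) ++ ρ.drop (j + 1), ⟨hlen2, ?_⟩, ?_, hlt⟩
  · rw [chain'_iff_getD K.delta _ d]
    intro k hk
    rw [hget k (by omega), hget (k + 1) (by omega)]
    have hchain := (chain'_iff_getD K.delta ρ d).mp hch
    split_ifs with ha hb hb
    · exact hchain k (by omega)
    · have hki : k = i := by omega
      subst hki
      rw [heq]
      have h5 : k + 1 + (j - k) = j + 1 := by omega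
      rw [h5]
      exact hchain j (by omega)
    · omega
    · have h5 : k + 1 + (j - i) = (k + (j - i)) + 1 := by omega
      rw [h5]
      exact hchain (k + (j - i)) (by omega)
  · have hne : ρ ≠ [] := by
      intro h; rw [h] at hlen; simp at hlen
    have hne' : (ρ.take (i + 1) ++ ρ.drop (j + 1)) ≠ [] := by
      intro h
      rw [h] at hlen2; simp at hlen2
    have hh : headW (ρ.take (i + 1) ++ ρ.drop (j + 1)) = headW ρ := by
      rw [headW_eq_getD _ hne' d, headW_eq_getD _ hne d, hget 0 (by omega),
        if_pos (by omega)]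
    have hi : intStates (ρ.take (i + 1) ++ ρ.drop (j + 1)) = intStates ρ := by
      ext w
      rw [mem_intStates_iff _ d, mem_intStates_iff _ d]
      constructor
      · rintro ⟨k, hk1, hk2, rfl⟩
        rw [hget k (by omega)]
        split_ifs with h'
        · exact ⟨k, hk1, by omega, rfl⟩
        · exact ⟨k + (j - i), by omega, by omega, rfl⟩
      · rintro ⟨k, hk1, hk2, rfl⟩
        by_cases hki : k ≤ i
        · refine ⟨k, hk1, by omega, ?_⟩
          rw [hget k (by omega), if_pos hki]
        · by_cases hkj : k ≤ j
          · obtain ⟨m, hm1, hm2, hm3⟩ := hcov k (by omega) hkj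
            refine ⟨m, hm1, by omega, ?_⟩
            rw [hget m (by omega), if_pos hm2]
            exact hm3
          · refine ⟨k - (j - i), by omega, by omega, ?_⟩
            rw [hget _ (by omega), if_neg (by omega)]
            congr 1
            omega
    have hl : lastW (ρ.take (i + 1) ++ ρ.drop (j + 1)) = lastW ρ := by
      rw [lastW_eq_getD _ hne' d, lastW_eq_getD _ hne d, hget _ (by omega),
        if_neg (by omega)]
      congr 1
      simp only [List.length_append, List.length_take, List.length_drop]
      omega
    unfold descEl
    rw [hh, hi, hl]

lemma exists_shorter {AP : Type u} {W : Type v} [Fintype W] [Nonempty W]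
    (K : KripkeStructure AP W) (ρ : List W) (hρ : IsTrack K ρ)
    (hlong : 2 + Fintype.card W ^ 2 < ρ.length) :
    ∃ ρ', IsTrack K ρ' ∧ descEl ρ' = descEl ρ ∧ ρ'.length < ρ.length := by
  classical
  obtain ⟨d⟩ := (inferInstance : Nonempty W)
  set S : ℕ → Finset ℕ := fun a => (Finset.Icc 1 a).filter
      (fun m => ∀ m' ∈ Finset.Ico 1 m, ρ.getD m' d ≠ ρ.getD m d) with hS
  have hmemS : ∀ a m, m ∈ S a →
      1 ≤ m ∧ m ≤ a ∧ ∀ m', 1 ≤ m' → m' < m → ρ.getD m' d ≠ ρ.getD m d := by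
    intro a m hm
    simp only [hS, Finset.mem_filter, Finset.mem_Icc, Finset.mem_Ico, and_imp] at hm
    exact ⟨hm.1.1, hm.1.2, hm.2⟩
  have hmemS' : ∀ a m, 1 ≤ m → m ≤ a →
      (∀ m', 1 ≤ m' → m' < m → ρ.getD m' d ≠ ρ.getD m d) → m ∈ S a := by
    intro a m h1 h2 h3
    simp only [hS, Finset.mem_filter, Finset.mem_Icc, Finset.mem_Ico, and_imp]
    exact ⟨⟨h1, h2⟩, h3⟩
  have hone : ∀ a, 1 ≤ a → 1 ∈ S a := by
    intro a ha
    exact hmemS' a 1 le_rfl ha (by intro m' h1 h2; omega)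
  have huniq : ∀ a m₁ m₂, m₁ ∈ S a → m₂ ∈ S a →
      ρ.getD m₁ d = ρ.getD m₂ d → m₁ = m₂ := by
    intro a m₁ m₂ h₁ h₂ he
    obtain ⟨h11, h12, h13⟩ := hmemS a m₁ h₁
    obtain ⟨h21, h22, h23⟩ := hmemS a m₂ h₂
    rcases Nat.lt_trichotomy m₁ m₂ with h | h | h
    · exact absurd he (h23 m₁ h11 h)
    · exact h
    · exact absurd he.symm (h13 m₂ h21 h)
  have hmono : ∀ a b, a ≤ b → ∀ m ∈ S a, m ∈ S b := by
    intro a b hab m hm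
    obtain ⟨h1, h2, h3⟩ := hmemS a m hm
    exact hmemS' b m h1 (by omega) h3
  set g : ℕ → ℕ := fun a => Nat.findGreatest (· ∈ S a) a with hg
  have hgmem : ∀ a, 1 ≤ a → g a ∈ S a := by
    intro a ha
    exact Nat.findGreatest_spec (P := (· ∈ S a)) ha (hone a ha)
  have hgle : ∀ a m, m ∈ S a → m ≤ g a := by
    intro a m hm
    exact Nat.le_findGreatest (hmemS a m hm).2.1 hm
  have key : ∀ a b, a ∈ Finset.Icc 1 (ρ.length - 2) → b ∈ Finset.Icc 1 (ρ.length - 2) →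
      a < b → ρ.getD a d = ρ.getD b d → ρ.getD (g a) d = ρ.getD (g b) d →
      ∃ ρ', IsTrack K ρ' ∧ descEl ρ' = descEl ρ ∧ ρ'.length < ρ.length := by
    intro a b ha hb hab he1 he2
    rw [Finset.mem_Icc] at ha hb
    have hgab : g a = g b :=
      huniq b _ _ (hmono a b hab.le _ (hgmem a ha.1)) (hgmem b hb.1) he2
    have hgaa : g a ≤ a := (hmemS a _ (hgmem a ha.1)).2.1
    refine cut_track K ρ hρ d a b ha.1 hab (by omega) he1 ?_
    intro k hak hkb
    have hTne : ((Finset.Icc 1 k).filter (fun m => ρ.getD m d = ρ.getD k d)).Nonempty := by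
      refine ⟨k, ?_⟩
      simp only [Finset.mem_filter, Finset.mem_Icc]
      exact ⟨⟨by omega, le_rfl⟩, by trivial⟩
    have hMmem := Finset.min'_mem _ hTne
    have hMle : ∀ x ∈ (Finset.Icc 1 k).filter (fun m => ρ.getD m d = ρ.getD k d),
        ((Finset.Icc 1 k).filter (fun m => ρ.getD m d = ρ.getD k d)).min' hTne ≤ x :=
      fun x hx => Finset.min'_le _ x hx
    simp only [Finset.mem_filter, Finset.mem_Icc] at hMmem
    have hMS : ((Finset.Icc 1 k).filter (fun m => ρ.getD m d = ρ.getD k d)).min' hTne ∈ S b := by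
      refine hmemS' b _ hMmem.1.1 (by omega) ?_
      intro m' h1' h2' hcontra
      have hm' : m' ∈ (Finset.Icc 1 k).filter (fun m => ρ.getD m d = ρ.getD k d) := by
        simp only [Finset.mem_filter, Finset.mem_Icc]
        exact ⟨⟨h1', by omega⟩, hcontra.trans hMmem.2⟩
      have := hMle m' hm'
      omega
    have hMg := hgle b _ hMS
    exact ⟨_, hMmem.1.1, by omega, hMmem.2⟩
  have hcard : (Finset.univ : Finset (W × W)).card < (Finset.Icc 1 (ρ.length - 2)).card := by
    rw [Finset.card_univ, Fintype.card_prod, Nat.card_Icc]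
    rw [pow_two] at hlong
    omega
  obtain ⟨i, hi, j, hj, hne, hF⟩ :=
    Finset.exists_ne_map_eq_of_card_lt_of_maps_to (s := Finset.Icc 1 (ρ.length - 2))
      hcard (f := fun a => ((ρ.getD a d, ρ.getD (g a) d) : W × W))
      (fun a _ => Finset.mem_univ _)
  simp only [Prod.mk.injEq] at hF
  rcases hne.lt_or_gt with h | h
  · exact key i j hi hj h hF.1 hF.2
  · exact key j i hj hi h hF.1.symm hF.2.symm

end AuxLemmas

/-- every descriptor element witnessed by a track is witnessed by a
track of length at most `2 + |W|²`. -/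
theorem descEl_short_witness [Fintype W] [Nonempty W] (K : KripkeStructure AP W)
    (ρ : List W) (hρ : IsTrack K ρ) :
    ∃ ρ' : List W, IsTrack K ρ' ∧ descEl ρ' = descEl ρ ∧
      ρ'.length ≤ 2 + Fintype.card W ^ 2 := by
  obtain ⟨N, hN⟩ : ∃ N, ρ.length ≤ N := ⟨ρ.length, le_rfl⟩
  induction N generalizing ρ with
  | zero => exact absurd hρ.1 (by omega)
  | succ N ih =>
    by_cases hsmall : ρ.length ≤ 2 + Fintype.card W ^ 2
    · exact ⟨ρ, hρ, rfl, hsmall⟩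
    · obtain ⟨ρ'', h1, h2, h3⟩ := exists_shorter K ρ hρ (by omega)
      obtain ⟨ρ', h1', h2', h3'⟩ := ih ρ'' h1 (by omega)
      exact ⟨ρ', h1', h2'.trans h2, h3'⟩
end

section
/- For any track ρ of a finite Kripke structure K=(AP,W,δ,μ,w0), the set DElm(ρ_ds) of descriptor elements occurring in the descriptor sequence ρ_ds of ρ has cardinality at most 1 + |W|². -/
open Classical

universe u v

variable {AP : Type u} {W : Type v}

lemma inner_take (a : W) (t : List W) (i : ℕ) (h : i + 1 ≤ t.length) :
    (((a :: t).take (i+2)).drop 1).dropLast = t.take i := by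
  simp only [List.take_succ_cons, List.drop_one, List.tail_cons]
  rw [List.dropLast_eq_take]
  simp [List.take_take]
  omega

lemma intStates_take (a : W) (t : List W) (i : ℕ) (h : i + 1 ≤ t.length) :
    intStates ((a :: t).take (i+2)) = {w | w ∈ t.take i} := by
  unfold intStates
  rw [inner_take a t i h]

lemma dsSeq_eq [Nonempty W] (a : W) (t : List W) (i : ℕ) (h : i < t.length) :
    dsSeq (a :: t) i = (a, {w | w ∈ t.take i}, lastW ((a :: t).take (i + 2))) := by
  unfold dsSeq descEl
  rw [intStates_take a t i (by omega)]
  congr 1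

lemma take_mono_set (t : List W) {i j : ℕ} (hij : i ≤ j) :
    ({w | w ∈ t.take i} : Set W) ⊆ {w | w ∈ t.take j} := by
  intro w hw
  simp only [Set.mem_setOf_eq] at hw ⊢
  have : w ∈ (t.take j).take i := by rwa [List.take_take, min_eq_left hij]
  exact List.mem_of_mem_take this

theorem DElm_card_le' [Fintype W] [Nonempty W]
    (ρ : List W) (h2 : 2 ≤ ρ.length) :
    Set.ncard {d : DescEl W | ∃ i < ρ.length - 1, dsSeq ρ i = d} ≤
      1 + Fintype.card W ^ 2 := by
  classical
  obtain ⟨a, b, t, rfl⟩ : ∃ a b t, ρ = a :: b :: t := by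
    match ρ, h2 with
    | a :: b :: t, _ => exact ⟨a, b, t, rfl⟩
  set t' := b :: t with ht'
  have hlen : (a :: t').length - 1 = t'.length := by simp
  set T : Set (DescEl W) := {d | ∃ i < (a :: t').length - 1, dsSeq (a :: t') i = d} with hT
  set d0 : DescEl W := dsSeq (a :: t') 0 with hd0
  set T' : Set (DescEl W) := {d | d ∈ T ∧ (d.2.1).Nonempty} with hT'
  have hTfin : T.Finite := by
    apply ((Set.finite_Iio ((a :: t').length - 1)).image (dsSeq (a :: t'))).subset
    rintro d ⟨i, hi, rfl⟩
    exact ⟨i, hi, rfl⟩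
  have hsub : T ⊆ insert d0 T' := by
    rintro d ⟨i, hi, rfl⟩
    rcases Nat.eq_zero_or_pos i with rfl | hpos
    · exact Set.mem_insert _ _
    · right
      refine ⟨⟨i, hi, rfl⟩, ?_⟩
      rw [hlen] at hi
      rw [dsSeq_eq a t' i hi]
      obtain ⟨k, rfl⟩ : ∃ k, i = k + 1 := ⟨i - 1, by omega⟩
      exact ⟨b, by simp [ht', List.take_succ_cons]⟩
  have key : ∀ i j, i < t'.length → j < t'.length → i ≤ j →
      ({w | w ∈ t'.take i} : Set W).ncard = ({w | w ∈ t'.take j} : Set W).ncard →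
      ({w | w ∈ t'.take i} : Set W) = {w | w ∈ t'.take j} :=
    fun i j _ _ hij hc =>
      Set.eq_of_subset_of_ncard_le (take_mono_set t' hij) (le_of_eq hc.symm)
  have hinj : Set.InjOn (fun d : DescEl W => ((d.2.1).ncard, d.2.2)) T' := by
    rintro d ⟨⟨i, hi, rfl⟩, -⟩ e ⟨⟨j, hj, rfl⟩, -⟩ hfe
    rw [hlen] at hi hj
    rw [dsSeq_eq a t' i hi, dsSeq_eq a t' j hj] at hfe ⊢
    simp only [Prod.mk.injEq] at hfe ⊢
    obtain ⟨hc, hl⟩ := hfe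
    have hS : ({w | w ∈ t'.take i} : Set W) = {w | w ∈ t'.take j} := by
      rcases le_total i j with h | h
      · exact key i j hi hj h hc
      · exact (key j i hj hi h hc.symm).symm
    exact ⟨trivial, hS, hl⟩
  have himg : (fun d : DescEl W => ((d.2.1).ncard, d.2.2)) '' T' ⊆
      ↑((Finset.Icc 1 (Fintype.card W)) ×ˢ (Finset.univ : Finset W)) := by
    rintro p ⟨d, ⟨⟨i, hi, rfl⟩, hne⟩, rfl⟩
    simp only [Finset.coe_product, Set.mem_prod, Finset.mem_coe, Finset.mem_Icc,
      Finset.coe_univ, Set.mem_univ, and_true]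
    constructor
    · exact (Set.ncard_pos (Set.toFinite _)).mpr hne
    · calc ((dsSeq (a :: t') i).2.1).ncard ≤ (Set.univ : Set W).ncard :=
            Set.ncard_le_ncard (Set.subset_univ _) Set.finite_univ
        _ = Fintype.card W := by rw [Set.ncard_univ, Nat.card_eq_fintype_card]
  calc T.ncard ≤ (insert d0 T').ncard :=
        Set.ncard_le_ncard hsub ((hTfin.subset (fun d hd => hd.1)).insert d0)
    _ ≤ T'.ncard + 1 := Set.ncard_insert_le _ _
    _ ≤ ((Finset.Icc 1 (Fintype.card W)) ×ˢ (Finset.univ : Finset W)).card + 1 := by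
        have h1 : ((fun d : DescEl W => ((d.2.1).ncard, d.2.2)) '' T').ncard = T'.ncard :=
          Set.ncard_image_of_injOn hinj
        have h2 : ((fun d : DescEl W => ((d.2.1).ncard, d.2.2)) '' T').ncard ≤
            ((Finset.Icc 1 (Fintype.card W)) ×ˢ (Finset.univ : Finset W) : Finset (ℕ × W)).card := by
          rw [← Set.ncard_coe_finset]
          exact Set.ncard_le_ncard himg (Set.toFinite _)
        omega
    _ ≤ 1 + Fintype.card W ^ 2 := by
        rw [Finset.card_product, Nat.card_Icc]
        simp [sq]

/-- the set of descriptor elements occurring in the descriptor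
sequence of a track has cardinality at most `1 + |W|²`. -/
theorem DElm_card_le [Fintype W] [Nonempty W] (K : KripkeStructure AP W)
    (ρ : List W) (hρ : IsTrack K ρ) :
    Set.ncard {d : DescEl W | ∃ i < ρ.length - 1, dsSeq ρ i = d} ≤
      1 + Fintype.card W ^ 2 :=
  DElm_card_le' ρ hρ.1
end

section
/- Let K=(AP,W,δ,μ,w0) be a finite Kripke structure, k ∈ ℕ, and ρ be a track over K. If |ρ| > τ(|W|,k), where τ(|W|,k) = min{ 1+(1+|W|)^(2k+4)+|W| , 1+(k+3)^(|W|²+1)+|W| }, then there exists another track ρ' over K whose length is at most τ(|W|,k) and which has the same B_k-descriptor as ρ. -/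
open Classical

universe u v

variable {AP : Type u} {W : Type v}

/-- The bound `τ(|W|, k)` on the length of track representatives. -/
def tau (w k : ℕ) : ℕ :=
  min (1 + (1 + w) ^ (2 * k + 4) + w) (1 + (k + 3) ^ (w ^ 2 + 1) + w)

/-! ### Auxiliary development -/

namespace TrackRepr

variable [Nonempty W]

/-- simp lemmas for bDesc -/
lemma bDesc_zero (σ : List W) : bDesc 0 σ = descEl σ := rfl

lemma bDesc_succ (k : ℕ) (σ : List W) :
    bDesc (k+1) σ = (descEl σ, {d | ∃ p, ProperPrefix p σ ∧ d = bDesc k p}) := rfl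

/-- The descriptor element can be read off any `bDesc`. -/
lemma descEl_eq_of_bDesc_eq {k : ℕ} {σ σ' : List W} (h : bDesc k σ = bDesc k σ') :
    descEl σ = descEl σ' := by
  cases k with
  | zero => exact h
  | succ k => exact congrArg Prod.fst h

/-- Truncation: equality of (k+1)-descriptors implies equality of k-descriptors. -/
lemma bDesc_trunc : ∀ (k : ℕ) {σ σ' : List W},
    bDesc (k+1) σ = bDesc (k+1) σ' → bDesc k σ = bDesc k σ' := by
  intro k
  induction k with
  | zero =>
    intro σ σ' h
    exact descEl_eq_of_bDesc_eq h
  | succ k ih =>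
    intro σ σ' h
    rw [bDesc_succ] at *
    have h1 : descEl σ = descEl σ' := congrArg Prod.fst h
    have h2 : {d | ∃ p, ProperPrefix p σ ∧ d = bDesc (k+1) p}
        = {d | ∃ p, ProperPrefix p σ' ∧ d = bDesc (k+1) p} := congrArg Prod.snd h
    refine Prod.ext h1 ?_
    ext d
    simp only [Set.mem_setOf_eq]
    constructor
    · rintro ⟨p, hp, rfl⟩
      have : bDesc (k+1) p ∈ {d | ∃ p, ProperPrefix p σ' ∧ d = bDesc (k+1) p} := by
        rw [← h2]; exact ⟨p, hp, rfl⟩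
      obtain ⟨p', hp', he⟩ := this
      exact ⟨p', hp', (ih he.symm).symm⟩
    · rintro ⟨p, hp, rfl⟩
      have : bDesc (k+1) p ∈ {d | ∃ p, ProperPrefix p σ ∧ d = bDesc (k+1) p} := by
        rw [h2]; exact ⟨p, hp, rfl⟩
      obtain ⟨p', hp', he⟩ := this
      exact ⟨p', hp', (ih he.symm).symm⟩

/-! ### List helpers -/

set_option linter.unusedSectionVars false

variable (ρ : List W)

/-- The last state of the prefix of length `i`. -/
noncomputable def yy (i : ℕ) : W := lastW (ρ.take i)

lemma yy_eq {i : ℕ} (h1 : 1 ≤ i) (h2 : i ≤ ρ.length) :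
    yy ρ i = ρ[i-1]'(by omega) := by
  unfold yy lastW
  rw [List.getLastD_eq_getLast?, List.getLast?_eq_getElem?]
  have hl : (ρ.take i).length = i := by
    rw [List.length_take]; omega
  rw [hl]
  rw [List.getElem?_take_of_lt (by omega)]
  rw [List.getElem?_eq_getElem (by omega)]
  rfl

lemma headW_take {i : ℕ} (h1 : 1 ≤ i) : headW (ρ.take i) = headW ρ := by
  unfold headW
  rw [List.headD_eq_head?_getD, List.headD_eq_head?_getD, List.head?_take]
  rw [if_neg (by omega)]

lemma intStates_take {i : ℕ} (h2 : 2 ≤ i) (hn : i ≤ ρ.length) :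
    intStates (ρ.take i) = {v | ∃ j, 2 ≤ j ∧ j < i ∧ yy ρ j = v} := by
  ext v
  simp only [intStates, Set.mem_setOf_eq, List.mem_iff_getElem]
  constructor
  · rintro ⟨m, hm, rfl⟩
    have hml : m < i - 2 := by
      have := hm
      simp only [List.length_dropLast, List.length_drop, List.length_take] at this
      omega
    refine ⟨m + 2, by omega, by omega, ?_⟩
    rw [yy_eq ρ (by omega) (by omega)]
    rw [List.getElem_dropLast, List.getElem_drop, List.getElem_take]
    congr 1
    omega
  · rintro ⟨j, hj2, hji, rfl⟩
    have hlen : (((ρ.take i).drop 1).dropLast).length = i - 2 := by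
      simp only [List.length_dropLast, List.length_drop, List.length_take]
      omega
    refine ⟨j - 2, by omega, ?_⟩
    rw [List.getElem_dropLast, List.getElem_drop, List.getElem_take]
    rw [yy_eq ρ (by omega) (by omega)]
    congr 1
    omega

lemma take_ne_take {i j : ℕ} (hij : i ≠ j) (hi : i ≤ ρ.length) (hj : j ≤ ρ.length) :
    ρ.take i ≠ ρ.take j := by
  intro h
  have : (ρ.take i).length = (ρ.take j).length := by rw [h]
  simp only [List.length_take] at this
  omega

lemma Dset_take (k : ℕ) {i : ℕ} (hn : i ≤ ρ.length) :
    {d | ∃ σ, ProperPrefix σ (ρ.take i) ∧ d = bDesc k σ}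
      = {d | ∃ j, 2 ≤ j ∧ j < i ∧ d = bDesc k (ρ.take j)} := by
  ext d
  simp only [Set.mem_setOf_eq, ProperPrefix]
  constructor
  · rintro ⟨σ, ⟨hpre, hne, hlen⟩, rfl⟩
    have heq : σ = (ρ.take i).take σ.length := List.prefix_iff_eq_take.mp hpre
    have hle : σ.length ≤ i := by
      have := hpre.length_le
      simp only [List.length_take] at this
      omega
    have heq2 : σ = ρ.take σ.length := by
      nth_rewrite 1 [heq]
      rw [List.take_take, Nat.min_eq_left hle]
    have hlt : σ.length < i := by
      rcases Nat.lt_or_ge σ.length i with h | h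
      · exact h
      · exfalso
        apply hne
        rw [heq2]
        have : σ.length = i := by omega
        rw [this]
    exact ⟨σ.length, hlen, hlt, by rw [← heq2]⟩
  · rintro ⟨j, hj2, hji, rfl⟩
    refine ⟨ρ.take j, ⟨?_, ?_, ?_⟩, rfl⟩
    · rw [show ρ.take j = (ρ.take i).take j by
          rw [List.take_take, Nat.min_eq_left (Nat.le_of_lt hji)]]
      exact List.take_prefix _ _
    · exact take_ne_take ρ (by omega) (by omega) hn
    · rw [List.length_take]; omega

/-! ### Extension lemmas -/

lemma mem_drop_one {σ : List W} (h : 2 ≤ σ.length) :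
    {v | v ∈ σ.drop 1} = intStates σ ∪ {lastW σ} := by
  ext v
  simp only [Set.mem_setOf_eq, intStates, Set.mem_union, Set.mem_singleton_iff,
    List.mem_iff_getElem]
  constructor
  · rintro ⟨m, hm, rfl⟩
    simp only [List.length_drop] at hm
    rcases Nat.lt_or_ge m (σ.length - 2) with hlt | hge
    · left
      refine ⟨m, ?_, ?_⟩
      · simp only [List.length_dropLast, List.length_drop]; omega
      · rw [List.getElem_dropLast, List.getElem_drop]
    · right
      unfold lastW
      rw [List.getLastD_eq_getLast?, List.getLast?_eq_getElem?,
        List.getElem?_eq_getElem (by omega)]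
      rw [List.getElem_drop]
      have : 1 + m = σ.length - 1 := by omega
      simp only [this]
      rfl
  · rintro (⟨m, hm, rfl⟩ | rfl)
    · simp only [List.length_dropLast, List.length_drop] at hm
      refine ⟨m, by simp only [List.length_drop]; omega, ?_⟩
      rw [List.getElem_dropLast, List.getElem_drop]
    · refine ⟨σ.length - 2, by simp only [List.length_drop]; omega, ?_⟩
      unfold lastW
      rw [List.getLastD_eq_getLast?, List.getLast?_eq_getElem?,
        List.getElem?_eq_getElem (by omega)]
      rw [List.getElem_drop]
      have : 1 + (σ.length - 2) = σ.length - 1 := by omega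
      simp only [this]
      rfl

lemma descEl_concat {σ σ' : List W} (h : descEl σ = descEl σ')
    (h2 : 2 ≤ σ.length) (h2' : 2 ≤ σ'.length) (a : W) :
    descEl (σ ++ [a]) = descEl (σ' ++ [a]) := by
  have hh : headW σ = headW σ' := congrArg Prod.fst h
  have hi : intStates σ = intStates σ' := congrArg (fun p => p.2.1) h
  have hl : lastW σ = lastW σ' := congrArg (fun p => p.2.2) h
  have henil : σ ≠ [] := by intro hh'; rw [hh'] at h2; simp at h2
  have henil' : σ' ≠ [] := by intro hh'; rw [hh'] at h2'; simp at h2'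
  unfold descEl
  have hhead : ∀ (l : List W), l ≠ [] → headW (l ++ [a]) = headW l := by
    intro l hl'
    unfold headW
    rw [List.headD_eq_head?_getD, List.headD_eq_head?_getD, List.head?_append]
    rw [List.head?_eq_head hl']
    rfl
  have hlast : ∀ (l : List W), lastW (l ++ [a]) = a := by
    intro l
    unfold lastW
    rw [List.getLastD_eq_getLast?, List.getLast?_concat]
    rfl
  have hint : ∀ (l : List W), 2 ≤ l.length → intStates (l ++ [a]) = intStates l ∪ {lastW l} := by
    intro l hlen
    rw [← mem_drop_one hlen]
    unfold intStates
    have hd : (l ++ [a]).drop 1 = l.drop 1 ++ [a] := by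
      rw [List.drop_append_of_le_length (by omega)]
    rw [hd, List.dropLast_concat]
  rw [hhead σ henil, hhead σ' henil', hlast σ, hlast σ', hint σ h2, hint σ' h2', hh, hi, hl]

lemma proper_prefix_concat_iff {p σ : List W} (a : W) (h2 : 2 ≤ σ.length) :
    ProperPrefix p (σ ++ [a]) ↔ (p <+: σ ∧ 2 ≤ p.length) := by
  constructor
  · rintro ⟨hpre, hne, hlen⟩
    refine ⟨?_, hlen⟩
    have heq : p = (σ ++ [a]).take p.length := List.prefix_iff_eq_take.mp hpre
    have hple : p.length ≤ σ.length + 1 := by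
      have := hpre.length_le
      simp only [List.length_append, List.length_singleton] at this
      omega
    have hlt : p.length ≤ σ.length := by
      rcases Nat.lt_or_ge p.length (σ.length + 1) with h | h
      · omega
      · exfalso
        apply hne
        have : p.length = (σ ++ [a]).length := by
          simp only [List.length_append, List.length_singleton]; omega
        rw [heq, this, List.take_length]
    rw [heq, List.take_append_of_le_length hlt]
    exact List.take_prefix _ _
  · rintro ⟨hpre, hlen⟩
    refine ⟨hpre.trans (List.prefix_append σ [a]), ?_, hlen⟩
    intro hcon
    have := congrArg List.length hcon
    have hple := hpre.length_le
    simp only [List.length_append, List.length_singleton] at this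
    omega

lemma bDesc_concat : ∀ (k : ℕ) {σ σ' : List W}, bDesc k σ = bDesc k σ' →
    2 ≤ σ.length → 2 ≤ σ'.length → ∀ a : W, bDesc k (σ ++ [a]) = bDesc k (σ' ++ [a]) := by
  intro k
  cases k with
  | zero =>
    intro σ σ' h h2 h2' a
    exact descEl_concat h h2 h2' a
  | succ k =>
    intro σ σ' h h2 h2' a
    have hd : descEl σ = descEl σ' := descEl_eq_of_bDesc_eq h
    have hDset : {d | ∃ p, ProperPrefix p σ ∧ d = bDesc k p}
        = {d | ∃ p, ProperPrefix p σ' ∧ d = bDesc k p} := congrArg Prod.snd h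
    have htr : bDesc k σ = bDesc k σ' := bDesc_trunc k h
    rw [bDesc_succ, bDesc_succ]
    refine Prod.ext (descEl_concat hd h2 h2' a) ?_
    have hchar : ∀ (l : List W), 2 ≤ l.length →
        {d | ∃ p, ProperPrefix p (l ++ [a]) ∧ d = bDesc k p}
          = {d | ∃ p, ProperPrefix p l ∧ d = bDesc k p} ∪ {bDesc k l} := by
      intro l hlen
      ext d
      simp only [Set.mem_setOf_eq, Set.mem_union, Set.mem_singleton_iff]
      constructor
      · rintro ⟨p, hp, rfl⟩
        rw [proper_prefix_concat_iff a hlen] at hp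
        obtain ⟨hpre, hplen⟩ := hp
        by_cases hpe : p = l
        · right; rw [hpe]
        · left; exact ⟨p, ⟨hpre, hpe, hplen⟩, rfl⟩
      · rintro (⟨p, hp, rfl⟩ | rfl)
        · exact ⟨p, (proper_prefix_concat_iff a hlen).mpr ⟨hp.1, hp.2.2⟩, rfl⟩
        · exact ⟨l, (proper_prefix_concat_iff a hlen).mpr ⟨List.prefix_refl l, hlen⟩, rfl⟩
    rw [hchar σ h2, hchar σ' h2', hDset, htr]

lemma bDesc_append (k : ℕ) (π : List W) : ∀ {σ σ' : List W}, bDesc k σ = bDesc k σ' →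
    2 ≤ σ.length → 2 ≤ σ'.length → bDesc k (σ ++ π) = bDesc k (σ' ++ π) := by
  induction π with
  | nil => intro σ σ' h _ _; simpa using h
  | cons a π ih =>
    intro σ σ' h h2 h2'
    have h1 : σ ++ a :: π = (σ ++ [a]) ++ π := by simp
    have h2'' : σ' ++ a :: π = (σ' ++ [a]) ++ π := by simp
    rw [h1, h2'']
    refine ih (bDesc_concat k h h2 h2' a) ?_ ?_ <;>
      simp only [List.length_append, List.length_singleton] <;> omega

/-! ### First-occurrence levels -/

/-- `Blv f k c`: position `c` (a prefix length, `c ≥ 2`) is a "new" position at level `k`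
for the sequence of last-states `f`. -/
def Blv (f : ℕ → W) : ℕ → ℕ → Prop
  | 0, c => 2 ≤ c ∧ ∀ j, 2 ≤ j → j < c → f j ≠ f c
  | k + 1, c => 2 ≤ c ∧ ∀ j, 2 ≤ j → j < c → f j = f c → ∃ e, j ≤ e ∧ e < c ∧ Blv f k e

lemma Blv_two_le {f : ℕ → W} {k c : ℕ} (h : Blv f k c) : 2 ≤ c := by
  cases k <;> exact h.1

lemma Blv_mono : ∀ {f : ℕ → W} (k : ℕ) {c : ℕ}, Blv f k c → Blv f (k+1) c := by
  intro f k
  induction k with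
  | zero =>
    rintro c ⟨hc, h⟩
    exact ⟨hc, fun j hj2 hjc hfe => absurd hfe (h j hj2 hjc)⟩
  | succ k ih =>
    rintro c ⟨hc, h⟩
    refine ⟨hc, fun j hj2 hjc hfe => ?_⟩
    obtain ⟨e, he1, he2, he3⟩ := h j hj2 hjc hfe
    exact ⟨e, he1, he2, ih he3⟩

lemma Blv_mono_le {f : ℕ → W} {k k' c : ℕ} (hk : k ≤ k') (h : Blv f k c) : Blv f k' c := by
  induction k' with
  | zero => rwa [Nat.le_zero.mp hk] at h
  | succ k' ih =>
    rcases Nat.lt_or_ge k (k'+1) with hlt | hge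
    · exact Blv_mono k' (ih (by omega))
    · rwa [show k = k' + 1 by omega] at h

lemma Blv_always_two (f : ℕ → W) (k : ℕ) : Blv f k 2 := by
  cases k with
  | zero => exact ⟨le_refl 2, fun j hj2 hj => by omega⟩
  | succ k => exact ⟨le_refl 2, fun j hj2 hj => by omega⟩

/-! ### The bridge between descriptors of prefixes and `Blv` -/

/-- Equality of the descriptor elements of two prefixes. -/
lemma descEl_take_eq_iff {i i' : ℕ} (h2 : 2 ≤ i) (hii' : i ≤ i') (hn : i' ≤ ρ.length) :
    descEl (ρ.take i) = descEl (ρ.take i') ↔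
      (yy ρ i = yy ρ i' ∧ ∀ c, i ≤ c → c < i' → ¬ Blv (yy ρ) 0 c) := by
  have hh : headW (ρ.take i) = headW (ρ.take i') := by
    rw [headW_take ρ (by omega), headW_take ρ (by omega)]
  constructor
  · intro h
    have hl : lastW (ρ.take i) = lastW (ρ.take i') := congrArg (fun p => p.2.2) h
    have hS : intStates (ρ.take i) = intStates (ρ.take i') := congrArg (fun p => p.2.1) h
    refine ⟨hl, ?_⟩
    rintro c hic hci' ⟨hc2, hcfirst⟩
    -- `yy ρ c` belongs to `S_{i'} = S_i`, so occurs as `yy ρ j` for some `j < i ≤ c`.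
    have hmem : yy ρ c ∈ intStates (ρ.take i') := by
      rw [intStates_take ρ (by omega) hn]
      exact ⟨c, by omega, by omega, rfl⟩
    rw [← hS, intStates_take ρ h2 (by omega)] at hmem
    obtain ⟨j, hj2, hji, hjv⟩ := hmem
    exact hcfirst j hj2 (by omega) hjv
  · rintro ⟨hy, hnoblv⟩
    unfold descEl
    rw [hh]
    have hS : intStates (ρ.take i) = intStates (ρ.take i') := by
      rw [intStates_take ρ h2 (by omega), intStates_take ρ (by omega) hn]
      ext v
      simp only [Set.mem_setOf_eq]
      constructor
      · rintro ⟨j, hj2, hji, rfl⟩; exact ⟨j, hj2, by omega, rfl⟩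
      · rintro ⟨j, hj2, hji', rfl⟩
        -- strong induction on j: find an earlier occurrence below i
        induction j using Nat.strong_induction_on with
        | _ j ihj =>
          rcases Nat.lt_or_ge j i with hlt | hge
          · exact ⟨j, hj2, hlt, rfl⟩
          · -- j ∈ [i, i'): not Blv 0, so has an earlier occurrence
            have : ¬ Blv (yy ρ) 0 j := hnoblv j hge hji'
            simp only [Blv] at this
            push_neg at this
            obtain ⟨j', hj'2, hj'j, hj'v⟩ := this hj2
            obtain ⟨j'', h1, h2', h3⟩ := ihj j' hj'j hj'2 (by omega)
            exact ⟨j'', h1, h2', by rw [h3, hj'v]⟩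
    rw [hS]
    unfold yy at hy
    rw [hy]

/-- The bridge: two prefixes (ending positions `i ≤ i'`) have the same `B_k`-descriptor
iff they end in the same state and no new level-`k` position occurs in `[i, i')`. -/
lemma bridge : ∀ (k : ℕ) {i i' : ℕ}, 2 ≤ i → i ≤ i' → i' ≤ ρ.length →
    (bDesc k (ρ.take i) = bDesc k (ρ.take i') ↔
      (yy ρ i = yy ρ i' ∧ ∀ c, i ≤ c → c < i' → ¬ Blv (yy ρ) k c)) := by
  intro k
  induction k with
  | zero =>
    intro i i' h2 hii' hn
    exact descEl_take_eq_iff ρ h2 hii' hn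
  | succ k ih =>
    intro i i' h2 hii' hn
    constructor
    · intro h
      have hd : descEl (ρ.take i) = descEl (ρ.take i') := descEl_eq_of_bDesc_eq h
      have hy : yy ρ i = yy ρ i' := ((descEl_take_eq_iff ρ h2 hii' hn).mp hd).1
      refine ⟨hy, ?_⟩
      rintro c hic hci' ⟨hc2, hcfirst⟩
      -- bDesc k (take c) occurs among proper prefixes of take i', hence of take i
      have hDset : {d | ∃ σ, ProperPrefix σ (ρ.take i) ∧ d = bDesc k σ}
          = {d | ∃ σ, ProperPrefix σ (ρ.take i') ∧ d = bDesc k σ} :=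
        congrArg Prod.snd h
      rw [Dset_take ρ k (le_trans hii' hn), Dset_take ρ k hn] at hDset
      have hmem : bDesc k (ρ.take c) ∈ {d | ∃ j, 2 ≤ j ∧ j < i' ∧ d = bDesc k (ρ.take j)} :=
        ⟨c, hc2, by omega, rfl⟩
      rw [← hDset] at hmem
      obtain ⟨j, hj2, hji, hjd⟩ := hmem
      have hbr := (ih (i := j) (i' := c) hj2 (by omega) (by omega)).mp hjd.symm
      obtain ⟨e, he1, he2, he3⟩ := hcfirst j hj2 (by omega) hbr.1
      exact hbr.2 e he1 he2 he3
    · rintro ⟨hy, hnoblv⟩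
      have hnoblv0 : ∀ c, i ≤ c → c < i' → ¬ Blv (yy ρ) 0 c := by
        intro c hic hci' hb
        exact hnoblv c hic hci' (Blv_mono_le (by omega) hb)
      have hd : descEl (ρ.take i) = descEl (ρ.take i') :=
        (descEl_take_eq_iff ρ h2 hii' hn).mpr ⟨hy, hnoblv0⟩
      rw [bDesc_succ, bDesc_succ]
      refine Prod.ext hd ?_
      rw [Dset_take ρ k (le_trans hii' hn), Dset_take ρ k hn]
      ext d
      simp only [Set.mem_setOf_eq]
      constructor
      · rintro ⟨j, hj2, hji, rfl⟩; exact ⟨j, hj2, by omega, rfl⟩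
      · rintro ⟨j, hj2, hji', rfl⟩
        induction j using Nat.strong_induction_on with
        | _ j ihj =>
          rcases Nat.lt_or_ge j i with hlt | hge
          · exact ⟨j, hj2, hlt, rfl⟩
          · have hnb : ¬ Blv (yy ρ) (k+1) j := hnoblv j hge hji'
            simp only [Blv] at hnb
            push_neg at hnb
            obtain ⟨j', hj'2, hj'j, hj'v, hnoe⟩ := hnb hj2
            have hsame : bDesc k (ρ.take j') = bDesc k (ρ.take j) := by
              refine (ih (i := j') (i' := j) hj'2 (by omega) (by omega)).mpr ⟨hj'v, ?_⟩
              intro e he1 he2 hbe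
              exact absurd hbe (by
                have := hnoe e he1 he2
                exact this)
            obtain ⟨j'', h1, h2', h3⟩ := ihj j' hj'j hj'2 (by omega)
            exact ⟨j'', h1, h2', by rw [← hsame, h3]⟩

/-! ### Counting new positions: the exponential bound -/

attribute [local instance] Classical.propDecidable

variable [Fintype W]

/-- The finset of new positions at level `k` among `(1, b)`. -/
noncomputable def Bfin (f : ℕ → W) (k b : ℕ) : Finset ℕ :=
  (Finset.Ioo 1 b).filter (Blv f k)

lemma card_Bfin_zero (f : ℕ → W) (b : ℕ) : (Bfin f 0 b).card ≤ Fintype.card W := by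
  have : (Bfin f 0 b).card ≤ (Finset.univ : Finset W).card := by
    apply Finset.card_le_card_of_injOn f (fun i _ => Finset.mem_univ _)
    intro i hi i' hi' hff
    simp only [Bfin, Finset.coe_filter, Set.mem_setOf_eq, Finset.mem_Ioo] at hi hi'
    by_contra hne
    rcases Nat.lt_or_ge i i' with hlt | hge
    · exact hi'.2.2 i (by omega) hlt hff
    · exact hi.2.2 i' (by omega) (by omega) hff.symm
  simpa using this

lemma card_Bfin_succ (f : ℕ → W) (k b : ℕ) :
    (Bfin f (k+1) b).card ≤ Fintype.card W * ((Bfin f k b).card + 1) := by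
  classical
  have : (Bfin f (k+1) b).card ≤
      ((Finset.univ : Finset W) ×ˢ Finset.range ((Bfin f k b).card + 1)).card := by
    apply Finset.card_le_card_of_injOn
      (fun i => (f i, (Bfin f k i).card))
    · intro i hi
      simp only [Finset.mem_coe, Finset.mem_product, Finset.mem_univ, true_and, Finset.mem_range]
      have hsub : Bfin f k i ⊆ Bfin f k b := by
        apply Finset.filter_subset_filter
        apply Finset.Ioo_subset_Ioo le_rfl
        simp only [Bfin, Finset.mem_coe, Finset.mem_filter, Finset.mem_Ioo] at hi
        omega
      have := Finset.card_le_card hsub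
      omega
    · intro i hi i' hi' hff
      simp only [Bfin, Finset.coe_filter, Set.mem_setOf_eq, Finset.mem_Ioo] at hi hi'
      simp only [Prod.mk.injEq] at hff
      by_contra hne
      -- wlog i < i'
      have key : ∀ a a' : ℕ, a < a' → 1 < a → a' < b → Blv f (k+1) a → Blv f (k+1) a' →
          f a = f a' → (Bfin f k a).card = (Bfin f k a').card → False := by
        intro a a' hlt ha ha' hba hba' hfe hcard
        obtain ⟨e, he1, he2, he3⟩ := hba'.2 a (by omega) hlt hfe
        have hss : Bfin f k a ⊂ Bfin f k a' := by
          constructor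
          · apply Finset.filter_subset_filter
            apply Finset.Ioo_subset_Ioo le_rfl (by omega)
          · intro hsub
            have hmem : e ∈ Bfin f k a' := by
              simp only [Bfin, Finset.mem_filter, Finset.mem_Ioo]
              exact ⟨⟨by omega, by omega⟩, he3⟩
            have : e ∈ Bfin f k a := hsub hmem
            simp only [Bfin, Finset.mem_filter, Finset.mem_Ioo] at this
            omega
        have := Finset.card_lt_card hss
        omega
      rcases Nat.lt_or_ge i i' with hlt | hge
      · exact key i i' hlt hi.1.1 hi'.1.2 hi.2 hi'.2 hff.1 hff.2
      · exact key i' i (by omega) hi'.1.1 hi.1.2 hi'.2 hi.2 hff.1.symm hff.2.symm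
  simpa using this

lemma card_Bfin_le_pow (f : ℕ → W) (k b : ℕ) :
    (Bfin f k b).card ≤ (1 + Fintype.card W) ^ (k + 1) := by
  induction k with
  | zero =>
    calc (Bfin f 0 b).card ≤ Fintype.card W := card_Bfin_zero f b
    _ ≤ (1 + Fintype.card W) ^ 1 := by rw [pow_one]; omega
  | succ k ih =>
    set w := Fintype.card W
    have hw : 1 ≤ (1:ℕ) + w := by omega
    calc (Bfin f (k+1) b).card ≤ w * ((Bfin f k b).card + 1) := card_Bfin_succ f k b
    _ ≤ w * ((1 + w) ^ (k+1) + 1) := by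
        apply Nat.mul_le_mul_left
        omega
    _ ≤ (1 + w) ^ (k + 2) := by
        have h1 : 1 ≤ (1 + w) ^ (k+1) := Nat.one_le_pow _ _ (by omega)
        have : w * ((1 + w) ^ (k+1) + 1) ≤ w * (1 + w) ^ (k+1) + (1 + w) ^ (k+1) := by
          have hwle : w ≤ (1 + w) ^ (k+1) := by
            calc w ≤ 1 + w := by omega
            _ = (1 + w) ^ 1 := (pow_one _).symm
            _ ≤ (1 + w) ^ (k+1) := Nat.pow_le_pow_right (by omega) (by omega)
          nlinarith
        calc w * ((1 + w) ^ (k+1) + 1) ≤ w * (1 + w) ^ (k+1) + (1+w)^(k+1) := this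
        _ = (1 + w) * (1 + w)^(k+1) := by ring
        _ = (1 + w) ^ (k + 2) := by ring

/-! ### Counting new positions: the polynomial bound -/

lemma Ioo_filter_split {a q b : ℕ} (P : ℕ → Prop) (hq1 : a < q) (hq2 : q < b) :
    ((Finset.Ioo a b).filter P).card ≤
      ((Finset.Ioo a q).filter P).card + 1 + ((Finset.Ioo q b).filter P).card := by
  classical
  have hsub : (Finset.Ioo a b).filter P ⊆
      ((Finset.Ioo a q).filter P) ∪ {q} ∪ ((Finset.Ioo q b).filter P) := by
    intro i hi
    simp only [Finset.mem_filter, Finset.mem_Ioo] at hi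
    simp only [Finset.mem_union, Finset.mem_filter, Finset.mem_Ioo, Finset.mem_singleton]
    rcases Nat.lt_trichotomy i q with h | h | h
    · exact Or.inl (Or.inl ⟨⟨hi.1.1, h⟩, hi.2⟩)
    · exact Or.inl (Or.inr h)
    · exact Or.inr ⟨⟨h, hi.1.2⟩, hi.2⟩
  calc ((Finset.Ioo a b).filter P).card
      ≤ (((Finset.Ioo a q).filter P) ∪ {q} ∪ ((Finset.Ioo q b).filter P)).card :=
        Finset.card_le_card hsub
    _ ≤ (((Finset.Ioo a q).filter P) ∪ {q}).card + ((Finset.Ioo q b).filter P).card :=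
        Finset.card_union_le _ _
    _ ≤ ((Finset.Ioo a q).filter P).card + 1 + ((Finset.Ioo q b).filter P).card := by
        have := Finset.card_union_le ((Finset.Ioo a q).filter P) ({q} : Finset ℕ)
        simp only [Finset.card_singleton] at this
        omega

lemma core_count (f : ℕ → W) : ∀ (s k t a b : ℕ), 1 ≤ a →
    ((Finset.Ioo a b).image f).card ≤ s →
    (∀ i, a < i → i < b → ∀ j, 2 ≤ j → j ≤ a → f j = f i →
      ∃ e, j ≤ e ∧ e < i ∧ Blv f t e) →
    (∀ c, a < c → c < b → ¬ Blv f t c) →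
    ((Finset.Ioo a b).filter (Blv f (t+k))).card ≤ (k+1)^(s+1) := by
  intro s
  induction s with
  | zero =>
    intro k t a b _ hval _ _
    have hempty : Finset.Ioo a b = ∅ := by
      by_contra hne
      obtain ⟨x, hx⟩ := Finset.nonempty_of_ne_empty hne
      have : f x ∈ (Finset.Ioo a b).image f := Finset.mem_image_of_mem f hx
      have := Finset.card_pos.mpr ⟨f x, this⟩
      omega
    rw [hempty]
    simp
  | succ s ihs =>
    intro k
    induction k with
    | zero =>
      intro t a b _ _ _ hclean
      have hempty : (Finset.Ioo a b).filter (Blv f (t+0)) = ∅ := by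
        apply Finset.eq_empty_of_forall_notMem
        intro c hc
        simp only [Finset.mem_filter, Finset.mem_Ioo] at hc
        exact hclean c hc.1.1 hc.1.2 hc.2
      rw [hempty]
      simp
    | succ k ihk =>
      intro t a b ha hval hcross hclean
      by_cases hab : a + 1 < b
      case neg =>
        have hempty : (Finset.Ioo a b).filter (Blv f (t+(k+1))) = ∅ := by
          apply Finset.eq_empty_of_forall_notMem
          intro c hc
          simp only [Finset.mem_filter, Finset.mem_Ioo] at hc
          omega
        rw [hempty]
        simp
      case pos =>
      -- the first occurrences within the block
      set Q : Finset ℕ :=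
        (Finset.Ioo a b).filter (fun i => ∀ j, a < j → j < i → f j ≠ f i) with hQdef
      have hQne : Q.Nonempty := by
        refine ⟨a+1, ?_⟩
        simp only [hQdef, Finset.mem_filter, Finset.mem_Ioo]
        exact ⟨⟨by omega, hab⟩, fun j h1 h2 => by omega⟩
      set q := Q.max' hQne with hqdef
      have hqmem : q ∈ Q := Q.max'_mem hQne
      have hqIoo : a < q ∧ q < b := by
        have := hqmem
        simp only [hQdef, Finset.mem_filter, Finset.mem_Ioo] at this
        exact this.1
      have hqFO : ∀ j, a < j → j < q → f j ≠ f q := by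
        have := hqmem
        simp only [hQdef, Finset.mem_filter, Finset.mem_Ioo] at this
        exact this.2
      -- Claim 1: within the block, level (t+1) new positions are exactly first occurrences
      have claim1 : ∀ i, a < i → i < b →
          (Blv f (t+1) i ↔ ∀ j, a < j → j < i → f j ≠ f i) := by
        intro i hai hib
        constructor
        · intro hb j haj hji hfe
          obtain ⟨e, he1, he2, he3⟩ := hb.2 j (by omega) hji hfe
          exact hclean e (by omega) (by omega) he3
        · intro hfo
          refine ⟨by omega, fun j hj2 hji hfe => ?_⟩
          rcases Nat.lt_or_ge a j with haj | hja
          · exact absurd hfe (hfo j haj hji)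
          · exact hcross i hai hib j hj2 hja hfe
      have hqBlv : Blv f (t+1) q := (claim1 q hqIoo.1 hqIoo.2).mpr hqFO
      -- Front part: (a, q), at most s values
      have hfrontval : ((Finset.Ioo a q).image f).card ≤ s := by
        have hsub : (Finset.Ioo a q).image f ⊆ ((Finset.Ioo a b).image f).erase (f q) := by
          intro v hv
          simp only [Finset.mem_image, Finset.mem_Ioo] at hv
          obtain ⟨j, ⟨hj1, hj2⟩, rfl⟩ := hv
          rw [Finset.mem_erase]
          refine ⟨hqFO j hj1 hj2, ?_⟩
          exact Finset.mem_image_of_mem f (by simp only [Finset.mem_Ioo]; omega)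
        have h1 := Finset.card_le_card hsub
        have h2 : f q ∈ (Finset.Ioo a b).image f :=
          Finset.mem_image_of_mem f (by simp only [Finset.mem_Ioo]; exact hqIoo)
        rw [Finset.card_erase_of_mem h2] at h1
        have := Finset.card_pos.mpr ⟨f q, h2⟩
        omega
      have hfront : ((Finset.Ioo a q).filter (Blv f (t+(k+1)))).card ≤ (k+2)^(s+1) := by
        have := ihs (k+1) t a q ha hfrontval
          (fun i hai hiq j hj2 hja hfe => hcross i hai (by omega) j hj2 hja hfe)
          (fun c hac hcq => hclean c hac (by omega))
        simpa using this
      -- Tail part: (q, b), clean at level t+1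
      have htailval : ((Finset.Ioo q b).image f).card ≤ s + 1 := by
        refine le_trans (Finset.card_le_card ?_) hval
        apply Finset.image_subset_image
        apply Finset.Ioo_subset_Ioo (by omega) le_rfl
      have htailcross : ∀ i, q < i → i < b → ∀ j, 2 ≤ j → j ≤ q → f j = f i →
          ∃ e, j ≤ e ∧ e < i ∧ Blv f (t+1) e :=
        fun i hqi hib j hj2 hjq hfe => ⟨q, hjq, hqi, hqBlv⟩
      have htailclean : ∀ c, q < c → c < b → ¬ Blv f (t+1) c := by
        intro c hqc hcb hbc
        have hcQ : c ∈ Q := by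
          simp only [hQdef, Finset.mem_filter, Finset.mem_Ioo]
          exact ⟨⟨by omega, hcb⟩, (claim1 c (by omega) hcb).mp hbc⟩
        have := Q.le_max' c hcQ
        omega
      have htail : ((Finset.Ioo q b).filter (Blv f (t+(k+1)))).card ≤ (k+1)^(s+2) := by
        have := ihk (t+1) q b (by omega) htailval htailcross htailclean
        have harith : t + 1 + k = t + (k+1) := by omega
        rw [harith] at this
        exact this
      -- combine
      have hsplit := Ioo_filter_split (Blv f (t+(k+1))) hqIoo.1 hqIoo.2
      have harith2 : (k+2)^(s+1) + 1 + (k+1)^(s+2) ≤ (k+2)^(s+2) := by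
        have hstrict : (k+1)^(s+1) < (k+2)^(s+1) :=
          Nat.pow_lt_pow_left (by omega) (by omega)
        have hexp : (k+2)^(s+2) = (k+2) * (k+2)^(s+1) := by ring
        have hexp2 : (k+1)^(s+2) = (k+1) * (k+1)^(s+1) := by ring
        nlinarith
      calc ((Finset.Ioo a b).filter (Blv f (t+(k+1)))).card
          ≤ ((Finset.Ioo a q).filter (Blv f (t+(k+1)))).card + 1
            + ((Finset.Ioo q b).filter (Blv f (t+(k+1)))).card := hsplit
        _ ≤ (k+2)^(s+1) + 1 + (k+1)^(s+2) := by omega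
        _ ≤ (k+2)^(s+2) := harith2

/-- Top-level polynomial count of new positions at level `K` among `(1, b)`. -/
lemma top_count (f : ℕ → W) : ∀ (s b : ℕ), ((Finset.Ioo 1 b).image f).card ≤ s →
    ∀ K, ((Finset.Ioo 1 b).filter (Blv f K)).card ≤ s * ((K+1)^(s+1) + 1) := by
  intro s
  induction s with
  | zero =>
    intro b hval K
    have hempty : Finset.Ioo 1 b = ∅ := by
      by_contra hne
      obtain ⟨x, hx⟩ := Finset.nonempty_of_ne_empty hne
      have : f x ∈ (Finset.Ioo 1 b).image f := Finset.mem_image_of_mem f hx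
      have := Finset.card_pos.mpr ⟨f x, this⟩
      omega
    rw [hempty]
    simp
  | succ s ihs =>
    intro b hval K
    by_cases hb : 2 < b
    case neg =>
      have hempty : Finset.Ioo 1 b = ∅ := by
        apply Finset.eq_empty_of_forall_notMem
        intro c hc
        simp only [Finset.mem_Ioo] at hc
        omega
      rw [hempty]
      simp
    case pos =>
    set Q : Finset ℕ :=
      (Finset.Ioo 1 b).filter (fun i => ∀ j, 1 < j → j < i → f j ≠ f i) with hQdef
    have hQne : Q.Nonempty := by
      refine ⟨2, ?_⟩
      simp only [hQdef, Finset.mem_filter, Finset.mem_Ioo]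
      exact ⟨⟨by omega, hb⟩, fun j h1 h2 => by omega⟩
    set q := Q.max' hQne with hqdef
    have hqmem : q ∈ Q := Q.max'_mem hQne
    have hqIoo : 1 < q ∧ q < b := by
      have := hqmem
      simp only [hQdef, Finset.mem_filter, Finset.mem_Ioo] at this
      exact this.1
    have hqFO : ∀ j, 1 < j → j < q → f j ≠ f q := by
      have := hqmem
      simp only [hQdef, Finset.mem_filter, Finset.mem_Ioo] at this
      exact this.2
    -- in this top block, Blv 0 points are exactly first-ever occurrences
    have claim1 : ∀ i, 1 < i → i < b → (Blv f 0 i ↔ ∀ j, 1 < j → j < i → f j ≠ f i) := by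
      intro i hi hib
      constructor
      · intro hblv j h1j hji
        exact hblv.2 j (by omega) hji
      · intro hfo
        exact ⟨by omega, fun j hj2 hji => hfo j (by omega) hji⟩
    have hqBlv : Blv f 0 q := (claim1 q hqIoo.1 hqIoo.2).mpr hqFO
    have hfrontval : ((Finset.Ioo 1 q).image f).card ≤ s := by
      have hsub : (Finset.Ioo 1 q).image f ⊆ ((Finset.Ioo 1 b).image f).erase (f q) := by
        intro v hv
        simp only [Finset.mem_image, Finset.mem_Ioo] at hv
        obtain ⟨j, ⟨hj1, hj2⟩, rfl⟩ := hv
        rw [Finset.mem_erase]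
        exact ⟨hqFO j hj1 hj2,
          Finset.mem_image_of_mem f (by simp only [Finset.mem_Ioo]; omega)⟩
      have h1 := Finset.card_le_card hsub
      have h2 : f q ∈ (Finset.Ioo 1 b).image f :=
        Finset.mem_image_of_mem f (by simp only [Finset.mem_Ioo]; exact hqIoo)
      rw [Finset.card_erase_of_mem h2] at h1
      have := Finset.card_pos.mpr ⟨f q, h2⟩
      omega
    have hfront := ihs q hfrontval K
    have htailval : ((Finset.Ioo q b).image f).card ≤ s + 1 := by
      refine le_trans (Finset.card_le_card ?_) hval
      apply Finset.image_subset_image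
      apply Finset.Ioo_subset_Ioo (by omega) le_rfl
    have htail : ((Finset.Ioo q b).filter (Blv f K)).card ≤ (K+1)^(s+2) := by
      have := core_count f (s+1) K 0 q b (by omega) htailval
        (fun i hqi hib j hj2 hjq hfe => ⟨q, hjq, hqi, hqBlv⟩)
        (by
          intro c hqc hcb hbc
          have hcQ : c ∈ Q := by
            simp only [hQdef, Finset.mem_filter, Finset.mem_Ioo]
            exact ⟨⟨by omega, hcb⟩, (claim1 c (by omega) hcb).mp hbc⟩
          have := Q.le_max' c hcQ
          omega)
      rw [show (0 + K) = K by omega] at this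
      exact this
    have hsplit := Ioo_filter_split (Blv f K) hqIoo.1 hqIoo.2
    have harith : s * ((K+1)^(s+1) + 1) + 1 + (K+1)^(s+2) ≤ (s+1) * ((K+1)^(s+2) + 1) := by
      have hmono : (K+1)^(s+1) ≤ (K+1)^(s+2) := Nat.pow_le_pow_right (by omega) (by omega)
      nlinarith
    calc ((Finset.Ioo 1 b).filter (Blv f K)).card
        ≤ ((Finset.Ioo 1 q).filter (Blv f K)).card + 1
          + ((Finset.Ioo q b).filter (Blv f K)).card := hsplit
      _ ≤ s * ((K+1)^(s+1) + 1) + 1 + (K+1)^(s+2) := by omega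
      _ ≤ (s+1) * ((K+1)^(s+2) + 1) := harith

/-! ### Bounding the number of descriptor classes among prefixes -/

lemma classes_card_le_Bfin (k : ℕ) (hn : 2 ≤ ρ.length) :
    ((Finset.Icc 2 ρ.length).image (fun i => bDesc k (ρ.take i))).card ≤
      (Bfin (yy ρ) (k+1) (ρ.length + 1)).card := by
  classical
  set n := ρ.length with hndef
  set F : ℕ → BDesc W k := fun i => bDesc k (ρ.take i) with hFdef
  set T := (Finset.Icc 2 n).image F with hTdef
  set rep : BDesc W k → ℕ := fun d =>
    if h : ((Finset.Icc 2 n).filter (fun i => F i = d)).Nonempty then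
      ((Finset.Icc 2 n).filter (fun i => F i = d)).min' h
    else 0 with hrepdef
  apply Finset.card_le_card_of_injOn rep
  · -- rep maps into Bfin
    intro d hd
    simp only [hTdef, Finset.mem_coe, Finset.mem_image] at hd
    obtain ⟨i0, hi0, hFi0⟩ := hd
    have hne : ((Finset.Icc 2 n).filter (fun i => F i = d)).Nonempty :=
      ⟨i0, Finset.mem_filter.mpr ⟨hi0, hFi0⟩⟩
    have hrep : rep d = ((Finset.Icc 2 n).filter (fun i => F i = d)).min' hne := by
      simp only [hrepdef, dif_pos hne]
    set i := ((Finset.Icc 2 n).filter (fun i => F i = d)).min' hne with hidef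
    have himem := Finset.min'_mem _ hne
    rw [Finset.mem_filter, Finset.mem_Icc] at himem
    obtain ⟨⟨hi2, hin⟩, hFi⟩ := himem
    rw [hrep]
    simp only [Finset.mem_coe, Bfin, Finset.mem_filter, Finset.mem_Ioo]
    refine ⟨⟨by omega, by omega⟩, ?_⟩
    by_contra hnb
    simp only [Blv] at hnb
    push_neg at hnb
    obtain ⟨j, hj2, hji, hjv, hnoe⟩ := hnb (by omega)
    have hsame : bDesc k (ρ.take j) = bDesc k (ρ.take i) :=
      (bridge ρ k hj2 (by omega) (by omega)).mpr ⟨hjv, hnoe⟩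
    have hjfil : j ∈ (Finset.Icc 2 n).filter (fun i => F i = d) := by
      rw [Finset.mem_filter, Finset.mem_Icc]
      exact ⟨⟨hj2, by omega⟩, by rw [hFdef]; simp only; rw [hsame]; exact hFi⟩
    have := Finset.min'_le _ j hjfil
    omega
  · -- injectivity
    intro d hd d' hd' hrepeq
    simp only [hTdef, Finset.coe_image, Set.mem_image] at hd hd'
    obtain ⟨i0, hi0, hFi0⟩ := hd
    obtain ⟨i0', hi0', hFi0'⟩ := hd'
    have hne : ((Finset.Icc 2 n).filter (fun i => F i = d)).Nonempty :=
      ⟨i0, Finset.mem_filter.mpr ⟨by exact_mod_cast hi0, hFi0⟩⟩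
    have hne' : ((Finset.Icc 2 n).filter (fun i => F i = d')).Nonempty :=
      ⟨i0', Finset.mem_filter.mpr ⟨by exact_mod_cast hi0', hFi0'⟩⟩
    have h1 : F (rep d) = d := by
      simp only [hrepdef, dif_pos hne]
      have := Finset.min'_mem _ hne
      rw [Finset.mem_filter] at this
      exact this.2
    have h2 : F (rep d') = d' := by
      simp only [hrepdef, dif_pos hne']
      have := Finset.min'_mem _ hne'
      rw [Finset.mem_filter] at this
      exact this.2
    rw [← h1, ← h2, hrepeq]

lemma w_le_aux (w : ℕ) (hw : 1 ≤ w) : w ≤ 3 ^ (w^2 - w) := by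
  rcases Nat.lt_or_ge w 2 with h1 | h2
  · have : w = 1 := by omega
    subst this
    simp
  · have h3 : w ≤ 2 ^ w := Nat.le_of_lt Nat.lt_two_pow_self
    have h4 : (2:ℕ) ^ w ≤ 3 ^ w := Nat.pow_le_pow_left (by omega) w
    have h5 : (3:ℕ) ^ w ≤ 3 ^ (w^2 - w) := by
      apply Nat.pow_le_pow_right (by omega)
      have : 2 * w ≤ w * w := Nat.mul_le_mul_right w h2
      have hsq : w^2 = w * w := sq w
      omega
    omega

lemma classes_add_one_le_tau (k : ℕ) (hn : 2 ≤ ρ.length) :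
    ((Finset.Icc 2 ρ.length).image (fun i => bDesc k (ρ.take i))).card + 1 ≤
      tau (Fintype.card W) k := by
  set w := Fintype.card W with hwdef
  have hw1 : 1 ≤ w := Fintype.card_pos
  set N := ((Finset.Icc 2 ρ.length).image (fun i => bDesc k (ρ.take i))).card with hNdef
  have hNB : N ≤ (Bfin (yy ρ) (k+1) (ρ.length + 1)).card := classes_card_le_Bfin ρ k hn
  -- exponential bound
  have hb1 : N ≤ (1 + w) ^ (k + 2) :=
    le_trans hNB (card_Bfin_le_pow (yy ρ) (k+1) (ρ.length + 1))
  -- polynomial bound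
  have hb2 : N ≤ w * ((k + 2) ^ (w + 1) + 1) := by
    refine le_trans hNB ?_
    have hval : ((Finset.Ioo 1 (ρ.length + 1)).image (yy ρ)).card ≤ w := by
      calc ((Finset.Ioo 1 (ρ.length + 1)).image (yy ρ)).card
          ≤ (Finset.univ : Finset W).card := Finset.card_le_card (Finset.subset_univ _)
        _ = w := rfl
    exact top_count (yy ρ) w (ρ.length + 1) hval (k+1)
  rw [tau]
  apply le_min
  · -- first bound
    have : (1 + w) ^ (k + 2) ≤ (1 + w) ^ (2 * k + 4) :=
      Nat.pow_le_pow_right (by omega) (by omega)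
    omega
  · -- second bound
    have key : w * (k + 2) ^ (w + 1) ≤ (k + 3) ^ (w ^ 2 + 1) := by
      have h1 : w ≤ (k + 3) ^ (w^2 - w) :=
        le_trans (w_le_aux w hw1) (Nat.pow_le_pow_left (by omega) _)
      have h2 : (k + 2) ^ (w + 1) ≤ (k + 3) ^ (w + 1) :=
        Nat.pow_le_pow_left (by omega) _
      calc w * (k + 2) ^ (w + 1) ≤ (k + 3) ^ (w^2 - w) * (k + 3) ^ (w + 1) :=
            Nat.mul_le_mul h1 h2
        _ = (k + 3) ^ (w^2 - w + (w + 1)) := (pow_add _ _ _).symm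
        _ = (k + 3) ^ (w^2 + 1) := by
            congr 1
            have : w ≤ w^2 := by
              have hsq : w^2 = w * w := sq w
              nlinarith
            omega
    have hb2' : N ≤ w * (k + 2) ^ (w + 1) + w := by
      have hexp : w * ((k + 2) ^ (w + 1) + 1) = w * (k + 2) ^ (w + 1) + w := by ring
      omega
    omega

/-! ### Contraction -/

lemma getLast?_take {i : ℕ} (h1 : 1 ≤ i) (h2 : i ≤ ρ.length) :
    (ρ.take i).getLast? = some (ρ[i-1]'(by omega)) := by
  rw [List.getLast?_eq_getElem?]
  have hl : (ρ.take i).length = i := by rw [List.length_take]; omega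
  rw [hl, List.getElem?_take_of_lt (by omega), List.getElem?_eq_getElem (by omega)]

lemma contract (K : KripkeStructure AP W) (k : ℕ) (hρ : IsTrack K ρ)
    {i i' : ℕ} (h2 : 2 ≤ i) (hii' : i < i') (hn : i' ≤ ρ.length)
    (heq : bDesc k (ρ.take i) = bDesc k (ρ.take i')) :
    ∃ ρ'' : List W, IsTrack K ρ'' ∧ ρ''.length < ρ.length ∧ bDesc k ρ'' = bDesc k ρ := by
  classical
  refine ⟨ρ.take i ++ ρ.drop i', ?_, ?_, ?_⟩
  · constructor
    · rw [List.length_append, List.length_take]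
      have := hρ.1
      omega
    · change List.IsChain K.delta _
      rw [List.isChain_append]
      refine ⟨hρ.2.take i, hρ.2.drop i', ?_⟩
      intro x hx y hy
      rw [getLast?_take ρ (by omega) (by omega)] at hx
      have hxv : ρ[i-1]'(by omega) = x := by
        rw [Option.mem_def, Option.some_inj] at hx
        exact hx
      rcases Nat.lt_or_ge i' ρ.length with hlt | hge
      · rw [List.head?_drop, List.getElem?_eq_getElem (by omega)] at hy
        have hyv : ρ[i']'(by omega) = y := by
          rw [Option.mem_def, Option.some_inj] at hy
          exact hy
        -- last states of the two prefixes agree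
        have hlast : yy ρ i = yy ρ i' := by
          have hd := descEl_eq_of_bDesc_eq heq
          exact congrArg (fun p => p.2.2) hd
        rw [yy_eq ρ (by omega) (by omega), yy_eq ρ (by omega) (by omega)] at hlast
        have hchain := List.isChain_iff_getElem.mp hρ.2
        have hstep := hchain (i' - 1) (by omega)
        have hgoal : K.delta (ρ[i'-1]'(by omega)) (ρ[i']'(by omega)) := by
          convert hstep using 2
          omega
        have hx2 : x = ρ[i'-1]'(by omega) := by rw [← hxv]; exact hlast
        rw [hx2, ← hyv]
        exact hgoal
      · exfalso
        have : ρ.drop i' = [] := by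
          apply List.drop_eq_nil_of_le
          omega
        rw [this] at hy
        simp at hy
  · rw [List.length_append, List.length_take, List.length_drop]
    omega
  · have hfin : bDesc k (ρ.take i ++ ρ.drop i') = bDesc k (ρ.take i' ++ ρ.drop i') := by
      apply bDesc_append k (ρ.drop i') heq
      · rw [List.length_take]; omega
      · rw [List.length_take]; omega
    rw [hfin, List.take_append_drop]

lemma shorten_step (K : KripkeStructure AP W) (k : ℕ) (hρ : IsTrack K ρ)
    (hlen : tau (Fintype.card W) k < ρ.length) :
    ∃ ρ'' : List W, IsTrack K ρ'' ∧ ρ''.length < ρ.length ∧ bDesc k ρ'' = bDesc k ρ := by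
  classical
  set n := ρ.length with hndef
  have hn2 : 2 ≤ n := hρ.1
  set F : ℕ → BDesc W k := fun i => bDesc k (ρ.take i) with hFdef
  have hcard : ((Finset.Icc 2 n).image F).card < (Finset.Icc 2 n).card := by
    have h1 := classes_add_one_le_tau ρ k hn2
    have h2 : (Finset.Icc 2 n).card = n - 1 := by
      rw [Nat.card_Icc]
      omega
    have h3 : (Finset.image F (Finset.Icc 2 n)).card
        = ((Finset.Icc 2 ρ.length).image (fun i => bDesc k (ρ.take i))).card := rfl
    omega
  obtain ⟨i, hi, i', hi', hne, heq⟩ :=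
    Finset.exists_ne_map_eq_of_card_lt_of_maps_to hcard
      (fun i (hi : i ∈ Finset.Icc 2 n) => Finset.mem_image_of_mem F hi)
  rw [Finset.mem_Icc] at hi hi'
  rcases Nat.lt_or_ge i i' with hlt | hge
  · exact contract ρ K k hρ hi.1 hlt hi'.2 heq
  · have hlt' : i' < i := by omega
    exact contract ρ K k hρ hi'.1 hlt' hi.2 heq.symm

lemma shorten_rec (K : KripkeStructure AP W) (k : ℕ) :
    ∀ (N : ℕ) (σ : List W), σ.length ≤ N → IsTrack K σ →
      ∃ ρ' : List W, IsTrack K ρ' ∧ ρ'.length ≤ tau (Fintype.card W) k ∧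
        bDesc k ρ' = bDesc k σ := by
  intro N
  induction N with
  | zero =>
    intro σ hlen hσ
    have := hσ.1
    omega
  | succ N ih =>
    intro σ hlen hσ
    rcases Nat.lt_or_ge (tau (Fintype.card W) k) σ.length with hgt | hle
    case inr => exact ⟨σ, hσ, hle, rfl⟩
    case inl =>
      obtain ⟨σ'', hσ'', hshort, heq⟩ := shorten_step σ K k hσ hgt
      obtain ⟨ρ', h1, h2, h3⟩ := ih σ'' (by omega) hσ''
      exact ⟨ρ', h1, h2, by rw [h3, heq]⟩

end TrackRepr


/-- every track longer than `τ(|W|, k)` has the same B_k-descriptor as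
some track of length at most `τ(|W|, k)`. -/
theorem track_representative [Fintype W] [Nonempty W] (K : KripkeStructure AP W)
    (k : ℕ) (ρ : List W) (hρ : IsTrack K ρ)
    (hlen : tau (Fintype.card W) k < ρ.length) :
    ∃ ρ' : List W, IsTrack K ρ' ∧ ρ'.length ≤ tau (Fintype.card W) k ∧
      bDesc k ρ' = bDesc k ρ := by
  exact TrackRepr.shorten_rec K k ρ.length ρ le_rfl hρ
end

section
/- Let ψ be a formula of the HS fragment AB̄, let K=(AP,W,δ,μ,w0) and K'=(AP',W',δ',μ',w0') be finite Kripke structures, and let ρ be a track over K and ρ' a track over K' such that L(K|pℓ(ψ), ρ) = L(K'|pℓ(ψ), ρ') and reach(K|pℓ(ψ), lst(ρ)) is isomorphic to reach(K'|pℓ(ψ), lst(ρ')). Then K,ρ ⊨ ψ if and only if K',ρ' ⊨ ψ. -/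
open Classical

universe u v

variable {AP : Type u} {W : Type v}

/-- The set of proposition letters occurring in a formula. -/
def props : HSFormula AP → Set AP
  | .prop p => {p}
  | .neg φ => props φ
  | .and φ ψ => props φ ∪ props ψ
  | .modA φ => props φ
  | .modAbar φ => props φ
  | .modB φ => props φ
  | .modBbar φ => props φ
  | .modEbar φ => props φ

/-- Membership in the HS fragment AB̄ (only `⟨A⟩` and `⟨B̄⟩` modalities). -/
inductive InABbar : HSFormula AP → Prop
  | prop (p : AP) : InABbar (.prop p)
  | neg {φ} : InABbar φ → InABbar (.neg φ)
  | and {φ ψ} : InABbar φ → InABbar ψ → InABbar (.and φ ψ)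
  | modA {φ} : InABbar φ → InABbar (.modA φ)
  | modBbar {φ} : InABbar φ → InABbar (.modBbar φ)

/-- `K|P`: the labelling of every state is restricted to `P`. -/
def KripkeStructure.restrict (K : KripkeStructure AP W) (P : Set AP) :
    KripkeStructure AP W :=
  { K with mu := fun w => K.mu w ∩ P }

/-- `reach(K, v)`: the substructure of the states reachable from `v`, with initial
state `v`. -/
def KripkeStructure.reach (K : KripkeStructure AP W) (v : W) :
    KripkeStructure AP {w : W // Relation.ReflTransGen K.delta v w} where
  delta a b := K.delta a.1 b.1
  leftTotal a := by
    obtain ⟨w', h⟩ := K.leftTotal a.1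
    exact ⟨⟨w', a.2.tail h⟩, h⟩
  mu a := K.mu a.1
  init := ⟨v, Relation.ReflTransGen.refl⟩

/-- Isomorphism of Kripke structures. -/
structure KripkeIso {AP : Type u} {W₁ W₂ : Type v}
    (K₁ : KripkeStructure AP W₁) (K₂ : KripkeStructure AP W₂) where
  toEquiv : W₁ ≃ W₂
  map_init : toEquiv K₁.init = K₂.init
  map_delta : ∀ a b, K₁.delta a b ↔ K₂.delta (toEquiv a) (toEquiv b)
  map_mu : ∀ a, K₁.mu a = K₂.mu (toEquiv a)

/-- `L(K, ρ) = ⋂_{w ∈ states(ρ)} μ(w)`. -/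
def trackLabel (K : KripkeStructure AP W) (ρ : List W) : Set AP :=
  {p | ∀ w ∈ ρ, p ∈ K.mu w}

section ABbarAux

open Relation

variable {W' : Type v}

/-- Symmetry of Kripke isomorphism. -/
def KripkeIso.symm {AP : Type u} {W₁ W₂ : Type v} {K₁ : KripkeStructure AP W₁}
    {K₂ : KripkeStructure AP W₂} (F : KripkeIso K₁ K₂) : KripkeIso K₂ K₁ where
  toEquiv := F.toEquiv.symm
  map_init := by rw [← F.map_init, Equiv.symm_apply_apply]
  map_delta a b := by
    conv_lhs => rw [← F.toEquiv.apply_symm_apply a, ← F.toEquiv.apply_symm_apply b]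
    exact (F.map_delta _ _).symm
  map_mu a := by
    conv_lhs => rw [← F.toEquiv.apply_symm_apply a]
    exact (F.map_mu _).symm

lemma chain_rtg {δ : W → W → Prop} : ∀ {t : List W} {x : W}, List.Chain δ x t →
    ∀ w ∈ t, Relation.ReflTransGen δ x w := by
  intro t
  induction t with
  | nil => intro x _ w hw; cases hw
  | cons y s ih =>
    intro x h w hw
    cases h with
    | cons_cons hxy hys =>
      rcases List.mem_cons.1 hw with rfl | hw
      · exact Relation.ReflTransGen.single hxy
      · exact (Relation.ReflTransGen.single hxy).trans (ih hys w hw)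

lemma track_reach {δ : W → W → Prop} {σ : List W} {v : W} (hc : σ.Chain' δ)
    (hh : σ.head? = some v) : ∀ w ∈ σ, Relation.ReflTransGen δ v w := by
  cases σ with
  | nil => simp at hh
  | cons x t =>
    obtain rfl : x = v := by simpa using hh
    intro w hw
    rcases List.mem_cons.1 hw with rfl | hw
    · exact .refl
    · exact chain_rtg hc w hw

lemma rtg_map {K : KripkeStructure AP W} {K' : KripkeStructure AP W'} {v : W} {v' : W'}
    (F : KripkeIso (K.reach v) (K'.reach v')) {u w : W}
    (hu : ReflTransGen K.delta v u) (h : ReflTransGen K.delta u w) :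
    ReflTransGen K'.delta (F.toEquiv ⟨u, hu⟩).1 (F.toEquiv ⟨w, hu.trans h⟩).1 := by
  induction h with
  | refl => exact ReflTransGen.refl
  | @tail b c hb hbc ih =>
      exact ih.tail ((F.map_delta ⟨b, hu.trans hb⟩ ⟨c, hu.trans (hb.tail hbc)⟩).1 hbc)

/-- Restricting an isomorphism of reachable parts to a reachable state. -/
noncomputable def subIso {K : KripkeStructure AP W} {K' : KripkeStructure AP W'} {v : W}
    {v' : W'} (F : KripkeIso (K.reach v) (K'.reach v')) (u : W)
    (hu : ReflTransGen K.delta v u) :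
    KripkeIso (K.reach u) (K'.reach (F.toEquiv ⟨u, hu⟩).1) where
  toEquiv :=
    { toFun := fun a => ⟨(F.toEquiv ⟨a.1, hu.trans a.2⟩).1, rtg_map F hu a.2⟩
      invFun := fun b => ⟨(F.toEquiv.symm ⟨b.1, (F.toEquiv ⟨u, hu⟩).2.trans b.2⟩).1, by
        have h0 := rtg_map (F := F.symm) (F.toEquiv ⟨u, hu⟩).2 b.2
        simpa [KripkeIso.symm] using h0⟩
      left_inv := by
        intro a
        apply Subtype.ext
        show (F.toEquiv.symm ⟨(F.toEquiv ⟨a.1, hu.trans a.2⟩).1, _⟩).1 = a.1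
        rw [show (⟨(F.toEquiv ⟨a.1, hu.trans a.2⟩).1, _⟩ :
            {w' : W' // ReflTransGen K'.delta v' w'}) = F.toEquiv ⟨a.1, hu.trans a.2⟩ from rfl,
          Equiv.symm_apply_apply]
      right_inv := by
        intro b
        apply Subtype.ext
        show (F.toEquiv ⟨(F.toEquiv.symm ⟨b.1, _⟩).1, _⟩).1 = b.1
        rw [show (⟨(F.toEquiv.symm ⟨b.1, (F.toEquiv ⟨u, hu⟩).2.trans b.2⟩).1, _⟩ :
            {w : W // ReflTransGen K.delta v w}) =
            F.toEquiv.symm ⟨b.1, (F.toEquiv ⟨u, hu⟩).2.trans b.2⟩ from rfl,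
          Equiv.apply_symm_apply] }
  map_init := Subtype.ext rfl
  map_delta a b := F.map_delta ⟨a.1, hu.trans a.2⟩ ⟨b.1, hu.trans b.2⟩
  map_mu a := F.map_mu ⟨a.1, hu.trans a.2⟩

end ABbarAux
section ABbarAux2

open Relation

variable {W' : Type v} {K : KripkeStructure AP W} {K' : KripkeStructure AP W'} {v : W} {v' : W'}

/-- Transfer of states along an isomorphism of reachable parts. -/
noncomputable def isoMap (F : KripkeIso (K.reach v) (K'.reach v')) (w : W) : W' :=
  if h : ReflTransGen K.delta v w then (F.toEquiv ⟨w, h⟩).1 else v'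

lemma isoMap_eq (F : KripkeIso (K.reach v) (K'.reach v')) {w : W}
    (h : ReflTransGen K.delta v w) : isoMap F w = (F.toEquiv ⟨w, h⟩).1 := dif_pos h

lemma isoMap_init (F : KripkeIso (K.reach v) (K'.reach v')) : isoMap F v = v' := by
  rw [isoMap_eq F ReflTransGen.refl]
  exact congrArg Subtype.val F.map_init

lemma isoMap_rtg (F : KripkeIso (K.reach v) (K'.reach v')) {w : W}
    (h : ReflTransGen K.delta v w) : ReflTransGen K'.delta v' (isoMap F w) := by
  rw [isoMap_eq F h]; exact (F.toEquiv ⟨w, h⟩).2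

lemma isoMap_delta (F : KripkeIso (K.reach v) (K'.reach v')) {a b : W}
    (ha : ReflTransGen K.delta v a) (hb : ReflTransGen K.delta v b) :
    K.delta a b ↔ K'.delta (isoMap F a) (isoMap F b) := by
  rw [isoMap_eq F ha, isoMap_eq F hb]
  exact F.map_delta ⟨a, ha⟩ ⟨b, hb⟩

lemma isoMap_mu (F : KripkeIso (K.reach v) (K'.reach v')) {a : W}
    (ha : ReflTransGen K.delta v a) : K.mu a = K'.mu (isoMap F a) := by
  rw [isoMap_eq F ha]
  exact F.map_mu ⟨a, ha⟩

noncomputable def isoMapSub (F : KripkeIso (K.reach v) (K'.reach v')) {u : W}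
    (hu : ReflTransGen K.delta v u) : KripkeIso (K.reach u) (K'.reach (isoMap F u)) :=
  (isoMap_eq F hu) ▸ subIso F u hu

lemma chain'_map_isoMap (F : KripkeIso (K.reach v) (K'.reach v')) {σ : List W}
    (hall : ∀ w ∈ σ, ReflTransGen K.delta v w) (hc : σ.Chain' K.delta) :
    (σ.map (isoMap F)).Chain' K'.delta := by
  unfold List.Chain' at hc ⊢
  rw [List.isChain_map]
  rw [List.isChain_iff_getElem] at hc ⊢
  intro i h
  exact (isoMap_delta F (hall _ (List.getElem_mem _)) (hall _ (List.getElem_mem _))).1 (hc i h)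

lemma trackLabel_map_isoMap (F : KripkeIso (K.reach v) (K'.reach v')) {σ : List W}
    (hall : ∀ w ∈ σ, ReflTransGen K.delta v w) :
    trackLabel K σ = trackLabel K' (σ.map (isoMap F)) := by
  ext p
  simp only [trackLabel, Set.mem_setOf_eq, List.mem_map, forall_exists_index, and_imp]
  constructor
  · rintro h w' w hw rfl
    rw [← isoMap_mu F (hall w hw)]
    exact h w hw
  · intro h w hw
    rw [isoMap_mu F (hall w hw)]
    exact h _ w hw rfl

lemma trackLabel_append (Kk : KripkeStructure AP W) (l₁ l₂ : List W) :
    trackLabel Kk (l₁ ++ l₂) = trackLabel Kk l₁ ∩ trackLabel Kk l₂ := by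
  ext p
  simp only [trackLabel, Set.mem_setOf_eq, List.mem_append, Set.mem_inter_iff]
  constructor
  · intro h; exact ⟨fun w hw => h w (Or.inl hw), fun w hw => h w (Or.inr hw)⟩
  · rintro ⟨h1, h2⟩ w (hw | hw)
    · exact h1 w hw
    · exact h2 w hw

end ABbarAux2
section ABbarAux3

open Relation

variable {W' : Type v}

lemma sat_modA_mp (K : KripkeStructure AP W) (K' : KripkeStructure AP W') (P : Set AP)
    (φ : HSFormula AP) {v : W} {v' : W'}
    (F : KripkeIso ((K.restrict P).reach v) ((K'.restrict P).reach v'))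
    (ih : ∀ (σ : List W) (σ' : List W'), IsTrack K σ → IsTrack K' σ' →
      ∀ u u', σ.getLast? = some u → σ'.getLast? = some u' →
      trackLabel (K.restrict P) σ = trackLabel (K'.restrict P) σ' →
      KripkeIso ((K.restrict P).reach u) ((K'.restrict P).reach u') →
      (sat K φ σ ↔ sat K' φ σ'))
    {ρ : List W} {ρ' : List W'} (hv : ρ.getLast? = some v) (hv' : ρ'.getLast? = some v')
    (h : sat K (.modA φ) ρ) : sat K' (.modA φ) ρ' := by
  obtain ⟨σ, hσtr, hσh, hσsat⟩ := h
  have hσh' : σ.head? = some v := hσh.trans hv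
  have hall : ∀ w ∈ σ, ReflTransGen (K.restrict P).delta v w := track_reach hσtr.2 hσh'
  have hne : σ ≠ [] := by rintro rfl; simp at hσh'
  refine ⟨σ.map (isoMap F), ⟨by simpa using hσtr.1, chain'_map_isoMap F hall hσtr.2⟩, ?_, ?_⟩
  · rw [List.head?_map, hσh', hv', Option.map_some]
    exact congrArg some (isoMap_init F)
  · refine (ih σ _ hσtr ⟨by simpa using hσtr.1, chain'_map_isoMap F hall hσtr.2⟩
      (σ.getLast hne) (isoMap F (σ.getLast hne)) (List.getLast?_eq_getLast hne) ?_
      (trackLabel_map_isoMap F hall) (isoMapSub F (hall _ (σ.getLast_mem hne)))).mp hσsat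
    rw [List.getLast?_map, List.getLast?_eq_getLast hne, Option.map_some]

lemma sat_modBbar_mp (K : KripkeStructure AP W) (K' : KripkeStructure AP W') (P : Set AP)
    (φ : HSFormula AP) {v : W} {v' : W'}
    (F : KripkeIso ((K.restrict P).reach v) ((K'.restrict P).reach v'))
    (ih : ∀ (σ : List W) (σ' : List W'), IsTrack K σ → IsTrack K' σ' →
      ∀ u u', σ.getLast? = some u → σ'.getLast? = some u' →
      trackLabel (K.restrict P) σ = trackLabel (K'.restrict P) σ' →
      KripkeIso ((K.restrict P).reach u) ((K'.restrict P).reach u') →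
      (sat K φ σ ↔ sat K' φ σ'))
    {ρ : List W} {ρ' : List W'} (_hρtr : IsTrack K ρ) (hρ'tr : IsTrack K' ρ')
    (hv : ρ.getLast? = some v) (hv' : ρ'.getLast? = some v')
    (hL : trackLabel (K.restrict P) ρ = trackLabel (K'.restrict P) ρ')
    (h : sat K (.modBbar φ) ρ) : sat K' (.modBbar φ) ρ' := by
  obtain ⟨σ, hσtr, ⟨⟨τ, rfl⟩, hne, -⟩, hσsat⟩ := h
  have hτne : τ ≠ [] := by rintro rfl; simp at hne
  obtain ⟨x, t, rfl⟩ := List.exists_cons_of_ne_nil hτne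
  obtain ⟨hcρ, hcτ, hlink⟩ := List.isChain_append.mp hσtr.2
  have hδvx : K.delta v x := hlink v hv x rfl
  have hallτ : ∀ w ∈ x :: t, ReflTransGen (K.restrict P).delta v w := by
    intro w hw
    exact (ReflTransGen.single hδvx).trans (track_reach hcτ rfl w hw)
  set τ' := (x :: t).map (isoMap F) with hτ'
  have hτ'ne : τ' ≠ [] := by simp [hτ']
  have hc'τ : τ'.Chain' K'.delta := chain'_map_isoMap F hallτ hcτ
  have hlink' : ∀ y ∈ ρ'.getLast?, ∀ z ∈ τ'.head?, K'.delta y z := by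
    intro y hy z hz
    have hy' : y = v' := by rw [hv'] at hy; exact (Option.some_inj.mp hy).symm
    have hz' : z = isoMap F x := by
      rw [hτ', List.head?_map] at hz
      exact (Option.some_inj.mp hz).symm
    subst hy' hz'
    have := (isoMap_delta F ReflTransGen.refl (ReflTransGen.single hδvx)).1 hδvx
    rwa [isoMap_init F] at this
  have hσ'tr : IsTrack K' (ρ' ++ τ') :=
    ⟨le_trans hρ'tr.1 (by simp), List.isChain_append.mpr ⟨hρ'tr.2, hc'τ, hlink'⟩⟩
  refine ⟨ρ' ++ τ', hσ'tr, ⟨⟨τ', rfl⟩, ?_, hρ'tr.1⟩, ?_⟩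
  · intro heq
    have := congrArg List.length heq
    simp [hτ'] at this
  · have hxt : (x :: t) ≠ [] := List.cons_ne_nil _ _
    have hul : (ρ ++ x :: t).getLast? = some ((x :: t).getLast hxt) := by
      rw [List.getLast?_append, List.getLast?_eq_getLast hxt]; rfl
    have hul' : (ρ' ++ τ').getLast? = some (isoMap F ((x :: t).getLast hxt)) := by
      rw [List.getLast?_append, hτ', List.getLast?_map, List.getLast?_eq_getLast hxt,
        Option.map_some]; rfl
    have hlab : trackLabel (K.restrict P) (ρ ++ x :: t) =
        trackLabel (K'.restrict P) (ρ' ++ τ') := by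
      rw [trackLabel_append, trackLabel_append, hL, trackLabel_map_isoMap F hallτ]
    exact (ih _ _ hσtr hσ'tr _ _ hul hul' hlab
      (isoMapSub F (hallτ _ (List.getLast_mem hxt)))).mp hσsat

end ABbarAux3
theorem aux_ABbar_invariance {AP : Type u} {W W' : Type v} (K : KripkeStructure AP W)
    (K' : KripkeStructure AP W') (P : Set AP) {ψ : HSFormula AP} (hψ : InABbar ψ) :
    props ψ ⊆ P →
    ∀ (ρ : List W) (ρ' : List W'), IsTrack K ρ → IsTrack K' ρ' →
      ∀ (v : W) (v' : W'), ρ.getLast? = some v → ρ'.getLast? = some v' →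
      trackLabel (K.restrict P) ρ = trackLabel (K'.restrict P) ρ' →
      KripkeIso ((K.restrict P).reach v) ((K'.restrict P).reach v') →
      (sat K ψ ρ ↔ sat K' ψ ρ') := by
  induction hψ with
  | prop p =>
    intro hP ρ ρ' hρ hρ' v v' hv hv' hL F
    have hp : p ∈ P := hP rfl
    simp only [sat]
    constructor
    · intro h w hw
      have hm : p ∈ trackLabel (K.restrict P) ρ := fun w hw => ⟨h w hw, hp⟩
      rw [hL] at hm
      exact (hm w hw).1
    · intro h w hw
      have hm : p ∈ trackLabel (K'.restrict P) ρ' := fun w hw => ⟨h w hw, hp⟩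
      rw [← hL] at hm
      exact (hm w hw).1
  | neg hφ ih =>
    intro hP ρ ρ' hρ hρ' v v' hv hv' hL F
    simp only [sat]
    exact not_congr (ih hP ρ ρ' hρ hρ' v v' hv hv' hL F)
  | and hφ hψ' ihφ ihψ =>
    intro hP ρ ρ' hρ hρ' v v' hv hv' hL F
    simp only [sat]
    exact and_congr (ihφ (fun x hx => hP (Or.inl hx)) ρ ρ' hρ hρ' v v' hv hv' hL F)
      (ihψ (fun x hx => hP (Or.inr hx)) ρ ρ' hρ hρ' v v' hv hv' hL F)
  | @modA φ hφ ih =>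
    intro hP ρ ρ' hρ hρ' v v' hv hv' hL F
    constructor
    · exact sat_modA_mp K K' P φ F
        (fun σ σ' h1 h2 u u' h3 h4 h5 G => ih hP σ σ' h1 h2 u u' h3 h4 h5 G) hv hv'
    · exact sat_modA_mp K' K P φ F.symm
        (fun σ' σ h1 h2 u' u h3 h4 h5 G =>
          (ih hP σ σ' h2 h1 u u' h4 h3 h5.symm G.symm).symm) hv' hv
  | @modBbar φ hφ ih =>
    intro hP ρ ρ' hρ hρ' v v' hv hv' hL F
    constructor
    · exact sat_modBbar_mp K K' P φ F
        (fun σ σ' h1 h2 u u' h3 h4 h5 G => ih hP σ σ' h1 h2 u u' h3 h4 h5 G)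
        hρ hρ' hv hv' hL
    · exact sat_modBbar_mp K' K P φ F.symm
        (fun σ' σ h1 h2 u' u h3 h4 h5 G =>
          (ih hP σ σ' h2 h1 u u' h4 h3 h5.symm G.symm).symm)
        hρ' hρ hv' hv hL.symm
/-- an AB̄ formula `ψ` cannot distinguish two tracks (possibly of
different Kripke structures) with the same labelling restricted to `pℓ(ψ)` and
isomorphic reachable parts (restricted to `pℓ(ψ)`) from their final states. -/
theorem ABbar_invariance {AP : Type u} {W W' : Type v} [Fintype W] [Fintype W']
    (K : KripkeStructure AP W) (K' : KripkeStructure AP W')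
    (ψ : HSFormula AP) (hψ : InABbar ψ)
    (ρ : List W) (ρ' : List W') (hρ : IsTrack K ρ) (hρ' : IsTrack K' ρ')
    (vρ : W) (vρ' : W') (hv : ρ.getLast? = some vρ) (hv' : ρ'.getLast? = some vρ')
    (hL : trackLabel (K.restrict (props ψ)) ρ = trackLabel (K'.restrict (props ψ)) ρ')
    (hiso : Nonempty (KripkeIso ((K.restrict (props ψ)).reach vρ)
      ((K'.restrict (props ψ)).reach vρ'))) :
    sat K ψ ρ ↔ sat K' ψ ρ' := by
  obtain ⟨F⟩ := hiso
  exact aux_ABbar_invariance K K' (props ψ) hψ (subset_refl _) ρ ρ' hρ hρ' vρ vρ' hv hv' hL F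
end
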